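/- arXiv:1612.09496 — 5 statements merged into one kernel-verified Lean document; each statement's English description precedes it below -/
import Mathlib

section
/- Let T > 0, let E_s, E_r : [0,T] → [0,∞) be nondecreasing harvested-energy curves, B_s : [0,T] → [0,∞) a nondecreasing arrival-data curve, and r_sr, r_rd rate functions. Let B* : [0,T] → [0,∞) be the transmitted data curve of some power policy feasible for (E_s, B_s, r_sr), and assume: (i) B* is convex; (ii) B*(T) ≥ ∫₀ᵀ r_sr(p(s)) ds for every policy p feasible for (E_s, B_s, r_sr) (B* maximizes the final transmitted data over the first hop); (iii) on every open interval on which B* is not affine, B*(t) ≥ ∫₀ᵗ r_sr(p(s)) ds for every policy p feasible for (E_s, B_s, r_sr) and every t in that interval. Then the two-hop maximum throughput satisfies D(T) = sup { ∫₀ᵀ r_rd(p(t)) dt : p is a power policy feasible for (E_r, B*, r_rd) }; i.e., the two-hop problem decomposes into a point-to-point problem at the source followed by a point-to-point problem at the relay with arrival-data curve B*. -/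
open MeasureTheory Set Filter intervalIntegral

noncomputable section

/-- A rate function: continuous, strictly increasing, concave on `[0,∞)`,
vanishing at `0` and tending to `∞`. -/
def IsRateFunction (r : ℝ → ℝ) : Prop :=
  ContinuousOn r (Set.Ici 0) ∧ StrictMonoOn r (Set.Ici 0) ∧
    ConcaveOn ℝ (Set.Ici 0) r ∧ r 0 = 0 ∧
    Filter.Tendsto r Filter.atTop Filter.atTop

/-- An integrable power policy `p` is feasible for harvested energy `E`,
arrival data `B` and rate function `r` on `[0,T]`. -/
def Feasible (T : ℝ) (E B r p : ℝ → ℝ) : Prop :=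
  IntervalIntegrable p MeasureTheory.volume 0 T ∧
  IntervalIntegrable (fun s => r (p s)) MeasureTheory.volume 0 T ∧
  (∀ t ∈ Set.Icc (0:ℝ) T, 0 ≤ p t) ∧
  (∀ t ∈ Set.Icc (0:ℝ) T, (∫ s in (0:ℝ)..t, p s) ≤ E t) ∧
  (∀ t ∈ Set.Icc (0:ℝ) T, (∫ s in (0:ℝ)..t, r (p s)) ≤ B t)

/-- Two-hop feasibility of a pair of power policies `(psr, prd)`. -/
def TwoHopFeasible (T : ℝ) (Es Er Bs rsr rrd psr prd : ℝ → ℝ) : Prop :=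
  IntervalIntegrable psr MeasureTheory.volume 0 T ∧
  IntervalIntegrable prd MeasureTheory.volume 0 T ∧
  IntervalIntegrable (fun s => rsr (psr s)) MeasureTheory.volume 0 T ∧
  IntervalIntegrable (fun s => rrd (prd s)) MeasureTheory.volume 0 T ∧
  (∀ t ∈ Set.Icc (0:ℝ) T, 0 ≤ psr t ∧ 0 ≤ prd t) ∧
  (∀ t ∈ Set.Icc (0:ℝ) T, (∫ s in (0:ℝ)..t, psr s) ≤ Es t) ∧
  (∀ t ∈ Set.Icc (0:ℝ) T, (∫ s in (0:ℝ)..t, prd s) ≤ Er t) ∧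
  (∀ t ∈ Set.Icc (0:ℝ) T, (∫ s in (0:ℝ)..t, rsr (psr s)) ≤ Bs t) ∧
  (∀ t ∈ Set.Icc (0:ℝ) T,
    (∫ s in (0:ℝ)..t, rrd (prd s)) ≤ ∫ s in (0:ℝ)..t, rsr (psr s))

open Topology

namespace TwoHopAux

/-- Continuity of the primitive. -/
lemma contPrimitive {g : ℝ → ℝ} {c : ℝ} (hc : 0 ≤ c)
    (hg : IntervalIntegrable g volume 0 c) :
    ContinuousOn (fun t => ∫ s in (0:ℝ)..t, g s) (Set.Icc 0 c) := by
  have := intervalIntegral.continuousOn_primitive_interval' hg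
    (Set.left_mem_uIcc (a := (0:ℝ)) (b := c))
  rwa [Set.uIcc_of_le hc] at this

lemma exists_alpha {g : ℝ → ℝ} {c : ℝ} (hc : 0 ≤ c)
    (hg : IntervalIntegrable g volume 0 c) {x : ℝ} (hx : x ∈ Set.Icc 0 c)
    (hfx : 0 < ∫ s in (0:ℝ)..x, g s) :
    ∃ α, 0 ≤ α ∧ α < x ∧ (∫ s in (0:ℝ)..α, g s) = 0 ∧
      ∀ s ∈ Set.Ioc α x, 0 < ∫ u in (0:ℝ)..s, g u := by
  set F : ℝ → ℝ := fun t => ∫ s in (0:ℝ)..t, g s with hF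
  have hFcont : ContinuousOn F (Set.Icc 0 c) := contPrimitive hc hg
  set S : Set ℝ := Set.Icc 0 x ∩ F ⁻¹' (Set.Iic 0) with hS
  have hS0 : (0:ℝ) ∈ S := by
    constructor
    · exact ⟨le_rfl, hx.1⟩
    · simp only [Set.mem_preimage, Set.mem_Iic, hF]
      simp
  have hSbdd : BddAbove S := ⟨x, fun s hs => hs.1.2⟩
  have hSclosed : IsClosed S :=
    (hFcont.mono (Set.Icc_subset_Icc le_rfl hx.2)).preimage_isClosed_of_isClosed
      isClosed_Icc isClosed_Iic
  set α := sSup S with hα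
  have hαS : α ∈ S := hSclosed.csSup_mem ⟨0, hS0⟩ hSbdd
  have hα0 : 0 ≤ α := hαS.1.1
  have hαle : F α ≤ 0 := hαS.2
  have hαx : α < x := by
    rcases lt_or_eq_of_le hαS.1.2 with h | h
    · exact h
    · exfalso; rw [h] at hαle; exact absurd hfx (not_lt.mpr hαle)
  have hpos : ∀ s ∈ Set.Ioc α x, 0 < F s := by
    intro s hs
    by_contra hns
    have hsS : s ∈ S := ⟨⟨hα0.trans hs.1.le, hs.2⟩, not_lt.mp hns⟩
    exact absurd (le_csSup hSbdd hsS) (not_le.mpr hs.1)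
  have hFα : F α = 0 := by
    have htend : Tendsto F (𝓝[Set.Ioc α x] α) (𝓝 (F α)) := by
      have h1 : ContinuousWithinAt F (Set.Icc 0 c) α :=
        hFcont α ⟨hα0, hαS.1.2.trans hx.2⟩
      exact h1.mono_left (nhdsWithin_mono α
        (fun s hs => ⟨hα0.trans hs.1.le, hs.2.trans hx.2⟩))
    haveI : (𝓝[Set.Ioc α x] α).NeBot := by
      apply mem_closure_iff_nhdsWithin_neBot.mp
      rw [closure_Ioc hαx.ne]
      exact ⟨le_rfl, hαx.le⟩
    have hge : 0 ≤ F α := ge_of_tendsto htend (by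
      filter_upwards [self_mem_nhdsWithin] with s hs
      exact (hpos s hs).le)
    linarith
  exact ⟨α, hα0, hαx, hFα, hpos⟩

lemma exists_beta {g : ℝ → ℝ} {c : ℝ} (hc : 0 ≤ c)
    (hg : IntervalIntegrable g volume 0 c)
    (hfc : (∫ s in (0:ℝ)..c, g s) ≤ 0) {x : ℝ} (hx : x ∈ Set.Icc 0 c)
    (hfx : 0 < ∫ s in (0:ℝ)..x, g s) :
    ∃ β, x < β ∧ β ≤ c ∧ (∫ s in (0:ℝ)..β, g s) = 0 ∧
      ∀ s ∈ Set.Ico x β, 0 < ∫ u in (0:ℝ)..s, g u := by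
  set F : ℝ → ℝ := fun t => ∫ s in (0:ℝ)..t, g s with hF
  have hFcont : ContinuousOn F (Set.Icc 0 c) := contPrimitive hc hg
  set S : Set ℝ := Set.Icc x c ∩ F ⁻¹' (Set.Iic 0) with hS
  have hSc : c ∈ S := ⟨⟨hx.2, le_rfl⟩, hfc⟩
  have hSbdd : BddBelow S := ⟨x, fun s hs => hs.1.1⟩
  have hSclosed : IsClosed S :=
    (hFcont.mono (Set.Icc_subset_Icc hx.1 le_rfl)).preimage_isClosed_of_isClosed
      isClosed_Icc isClosed_Iic
  set β := sInf S with hβ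
  have hβS : β ∈ S := hSclosed.csInf_mem ⟨c, hSc⟩ hSbdd
  have hβc : β ≤ c := hβS.1.2
  have hβle : F β ≤ 0 := hβS.2
  have hxβ : x < β := by
    rcases lt_or_eq_of_le hβS.1.1 with h | h
    · exact h
    · exfalso; rw [← h] at hβle; exact absurd hfx (not_lt.mpr hβle)
  have hpos : ∀ s ∈ Set.Ico x β, 0 < F s := by
    intro s hs
    by_contra hns
    have hsS : s ∈ S := ⟨⟨hs.1, hs.2.le.trans hβc⟩, not_lt.mp hns⟩
    exact absurd (csInf_le hSbdd hsS) (not_le.mpr hs.2)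
  have hFβ : F β = 0 := by
    have htend : Tendsto F (𝓝[Set.Ico x β] β) (𝓝 (F β)) := by
      have h1 : ContinuousWithinAt F (Set.Icc 0 c) β :=
        hFcont β ⟨hx.1.trans hβS.1.1, hβc⟩
      exact h1.mono_left (nhdsWithin_mono β
        (fun s hs => ⟨hx.1.trans hs.1, hs.2.le.trans hβc⟩))
    haveI : (𝓝[Set.Ico x β] β).NeBot := by
      apply mem_closure_iff_nhdsWithin_neBot.mp
      rw [closure_Ico hxβ.ne]
      exact ⟨hxβ.le, le_rfl⟩
    have hge : 0 ≤ F β := ge_of_tendsto htend (by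
      filter_upwards [self_mem_nhdsWithin] with s hs
      exact (hpos s hs).le)
    linarith
  exact ⟨β, hxβ, hβc, hFβ, hpos⟩

lemma isOpen_posSet {g : ℝ → ℝ} {c : ℝ} (hc : 0 ≤ c)
    (hg : IntervalIntegrable g volume 0 c) :
    IsOpen {t : ℝ | t ∈ Set.Ioo 0 c ∧ 0 < ∫ s in (0:ℝ)..t, g s} := by
  set F : ℝ → ℝ := fun t => ∫ s in (0:ℝ)..t, g s with hF
  have hFcont : ContinuousOn F (Set.Icc 0 c) := contPrimitive hc hg
  rw [isOpen_iff_mem_nhds]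
  rintro x ⟨hxIoo, hxpos⟩
  have hxat : ContinuousAt F x :=
    (hFcont x (Set.Ioo_subset_Icc_self hxIoo)).continuousAt
      (Icc_mem_nhds hxIoo.1 hxIoo.2)
  have h1 : F ⁻¹' Set.Ioi 0 ∈ 𝓝 x := hxat.preimage_mem_nhds (isOpen_Ioi.mem_nhds hxpos)
  have h2 : Set.Ioo 0 c ∈ 𝓝 x := isOpen_Ioo.mem_nhds hxIoo
  filter_upwards [h1, h2] with t ht1 ht2
  exact ⟨ht2, ht1⟩

/-- Lemma A: the integral of `g` over the set where its primitive is positive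
vanishes, provided the primitive is nonpositive at the right endpoint. -/
lemma integral_posSet_eq_zero {g : ℝ → ℝ} {c : ℝ} (hc : 0 ≤ c)
    (hg : IntervalIntegrable g volume 0 c)
    (hfc : (∫ s in (0:ℝ)..c, g s) ≤ 0) :
    ∫ s in {t : ℝ | t ∈ Set.Ioo 0 c ∧ 0 < ∫ u in (0:ℝ)..t, g u}, g s = 0 := by
  set F : ℝ → ℝ := fun t => ∫ s in (0:ℝ)..t, g s with hF
  set V : Set ℝ := {t : ℝ | t ∈ Set.Ioo 0 c ∧ 0 < F t} with hV
  have hVopen : IsOpen V := isOpen_posSet hc hg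
  have hVm : MeasurableSet V := hVopen.measurableSet
  have hVsub : V ⊆ Set.Ioo 0 c := fun t ht => ht.1
  have hgIoc : IntegrableOn g (Set.Ioc 0 c) volume := hg.1
  have hgV : IntegrableOn g V volume :=
    hgIoc.mono_set (hVsub.trans Set.Ioo_subset_Ioc_self)
  have hgVabs : IntegrableOn (fun s => |g s|) V volume := hgV.abs
  -- the maximal excursion interval around each point of V
  have hch : ∀ x : V, ∃ ab : ℝ × ℝ,
      0 ≤ ab.1 ∧ ab.1 < (x:ℝ) ∧ (x:ℝ) < ab.2 ∧ ab.2 ≤ c ∧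
      F ab.1 = 0 ∧ F ab.2 = 0 ∧ ∀ s ∈ Set.Ioo ab.1 ab.2, 0 < F s := by
    rintro ⟨x, hxIoo, hxpos⟩
    obtain ⟨α, hα0, hαx, hFα, hαpos⟩ :=
      exists_alpha hc hg (Set.Ioo_subset_Icc_self hxIoo) hxpos
    obtain ⟨β, hxβ, hβc, hFβ, hβpos⟩ :=
      exists_beta hc hg hfc (Set.Ioo_subset_Icc_self hxIoo) hxpos
    refine ⟨(α, β), hα0, hαx, hxβ, hβc, hFα, hFβ, ?_⟩
    intro s hs
    rcases le_or_gt s x with h | h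
    · exact hαpos s ⟨hs.1, h⟩
    · exact hβpos s ⟨h.le, hs.2⟩
  choose I hI using hch
  -- key uniqueness of excursion intervals
  have huniq : ∀ x y : V, ¬ Disjoint (Set.Ioo (I x).1 (I x).2) (Set.Ioo (I y).1 (I y).2) →
      I x = I y := by
    have main : ∀ x y : V, (Set.Ioo (I x).1 (I x).2 ∩ Set.Ioo (I y).1 (I y).2).Nonempty →
        (I x).1 ≤ (I y).1 → (I x).1 = (I y).1 := by
      rintro x y ⟨z, hzx, hzy⟩ hle
      by_contra hne
      have hlt : (I x).1 < (I y).1 := lt_of_le_of_ne hle hne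
      have : (I y).1 ∈ Set.Ioo (I x).1 (I x).2 := ⟨hlt, lt_trans hzy.1 hzx.2⟩
      have := (hI x).2.2.2.2.2.2 _ this
      rw [(hI y).2.2.2.2.1] at this
      exact lt_irrefl 0 this
    have main2 : ∀ x y : V, (Set.Ioo (I x).1 (I x).2 ∩ Set.Ioo (I y).1 (I y).2).Nonempty →
        (I x).2 ≤ (I y).2 → (I x).2 = (I y).2 := by
      rintro x y ⟨z, hzx, hzy⟩ hle
      by_contra hne
      have hlt : (I x).2 < (I y).2 := lt_of_le_of_ne hle hne
      have : (I x).2 ∈ Set.Ioo (I y).1 (I y).2 := ⟨lt_trans hzy.1 hzx.2, hlt⟩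
      have := (hI y).2.2.2.2.2.2 _ this
      rw [(hI x).2.2.2.2.2.1] at this
      exact lt_irrefl 0 this
    intro x y hnd
    have hne : (Set.Ioo (I x).1 (I x).2 ∩ Set.Ioo (I y).1 (I y).2).Nonempty :=
      Set.not_disjoint_iff_nonempty_inter.mp hnd
    have hne' : (Set.Ioo (I y).1 (I y).2 ∩ Set.Ioo (I x).1 (I x).2).Nonempty := by
      rwa [Set.inter_comm]
    have h1 : (I x).1 = (I y).1 := by
      rcases le_total (I x).1 (I y).1 with h | h
      · exact main x y hne h
      · exact (main y x hne' h).symm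
    have h2 : (I x).2 = (I y).2 := by
      rcases le_total (I x).2 (I y).2 with h | h
      · exact main2 x y hne h
      · exact (main2 y x hne' h).symm
    exact Prod.ext h1 h2
  -- each excursion interval lies in V and carries zero integral
  have hIsubV : ∀ x : V, Set.Ioo (I x).1 (I x).2 ⊆ V := by
    intro x s hs
    refine ⟨⟨lt_of_le_of_lt (hI x).1 hs.1, lt_of_lt_of_le hs.2 (hI x).2.2.2.1⟩,
      (hI x).2.2.2.2.2.2 s hs⟩
  have hIzero : ∀ x : V, ∫ s in Set.Ioo (I x).1 (I x).2, g s = 0 := by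
    intro x
    have hab : (I x).1 ≤ (I x).2 := le_of_lt (lt_trans (hI x).2.1 (hI x).2.2.1)
    have h1 : IntervalIntegrable g volume (I x).1 (I x).2 := by
      apply hg.mono_set
      rw [Set.uIcc_of_le hab, Set.uIcc_of_le hc]
      exact Set.Icc_subset_Icc (hI x).1 (hI x).2.2.2.1
    have h0a : IntervalIntegrable g volume 0 (I x).1 := by
      apply hg.mono_set
      rw [Set.uIcc_of_le (hI x).1, Set.uIcc_of_le hc]
      exact Set.Icc_subset_Icc le_rfl (hab.trans (hI x).2.2.2.1)
    have h0b : IntervalIntegrable g volume 0 (I x).2 := by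
      apply hg.mono_set
      rw [Set.uIcc_of_le ((hI x).1.trans hab), Set.uIcc_of_le hc]
      exact Set.Icc_subset_Icc le_rfl (hI x).2.2.2.1
    have key : ∫ s in (I x).1..(I x).2, g s = F (I x).2 - F (I x).1 :=
      (intervalIntegral.integral_interval_sub_left h0b h0a).symm
    rw [(hI x).2.2.2.2.1, (hI x).2.2.2.2.2.1, sub_zero] at key
    rw [← MeasureTheory.integral_Ioc_eq_integral_Ioo,
      ← intervalIntegral.integral_of_le hab, key]
  -- compact exhaustion of V
  set K : ℕ → Set ℝ := fun n => Set.Icc 0 c ∩ {x | 1 / (n + 1 : ℝ) ≤ Metric.infDist x Vᶜ}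
    with hK
  have hKclosed : ∀ n, IsClosed (K n) :=
    fun n => isClosed_Icc.inter (isClosed_le continuous_const
      (Metric.continuous_infDist_pt Vᶜ))
  have hKcompact : ∀ n, IsCompact (K n) :=
    fun n => isCompact_Icc.inter_right (isClosed_le continuous_const
      (Metric.continuous_infDist_pt Vᶜ))
  have hVcne : Vᶜ.Nonempty := ⟨0, fun h => lt_irrefl 0 (hVsub h).1⟩
  have hKV : ∀ n, K n ⊆ V := by
    intro n x hx
    by_contra hxV
    have hz : Metric.infDist x Vᶜ = 0 := Metric.infDist_zero_of_mem hxV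
    have h2 : 1 / (n + 1 : ℝ) ≤ Metric.infDist x Vᶜ := hx.2
    rw [hz] at h2
    have hp : (0:ℝ) < 1 / (n + 1 : ℝ) := by positivity
    linarith
  have hKmono : Monotone K := by
    intro a b hab x hx
    have h2 : 1 / (a + 1 : ℝ) ≤ Metric.infDist x Vᶜ := hx.2
    have h3 : 1 / (b + 1 : ℝ) ≤ 1 / (a + 1 : ℝ) := by
      apply one_div_le_one_div_of_le (by positivity)
      exact_mod_cast Nat.add_le_add_right hab 1
    exact ⟨hx.1, le_trans h3 h2⟩
  have hKunion : (⋃ n, K n) = V := by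
    apply Set.Subset.antisymm
    · exact Set.iUnion_subset hKV
    · intro x hx
      have hxpos : 0 < Metric.infDist x Vᶜ :=
        (hVopen.isClosed_compl.notMem_iff_infDist_pos hVcne).mp (by simpa using hx)
      obtain ⟨n, hn⟩ := exists_nat_one_div_lt hxpos
      exact Set.mem_iUnion.mpr ⟨n, ⟨Set.Ioo_subset_Icc_self (hVsub hx), hn.le⟩⟩
  -- the estimate for each n
  have hest : ∀ n : ℕ, |∫ s in V, g s| ≤ (∫ s in V, |g s|) - ∫ s in K n, |g s| := by
    intro n
    -- finite subcover
    have hcover : K n ⊆ ⋃ x : V, Set.Ioo (I x).1 (I x).2 := by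
      intro y hy
      exact Set.mem_iUnion.mpr ⟨⟨y, hKV n hy⟩,
        ⟨(hI ⟨y, hKV n hy⟩).2.1, (hI ⟨y, hKV n hy⟩).2.2.1⟩⟩
    obtain ⟨sf, hsf⟩ := (hKcompact n).elim_finite_subcover
      (fun x : V => Set.Ioo (I x).1 (I x).2) (fun x => isOpen_Ioo) hcover
    set P : Finset (ℝ × ℝ) := sf.image I with hP
    set W : Set ℝ := ⋃ p ∈ P, Set.Ioo p.1 p.2 with hW
    have hWm : MeasurableSet W := by
      apply P.measurableSet_biUnion
      intro p _
      exact measurableSet_Ioo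
    have hKW : K n ⊆ W := by
      intro y hy
      obtain ⟨x, hxs, hyx⟩ := Set.mem_iUnion₂.mp (hsf hy)
      exact Set.mem_biUnion (Finset.mem_image_of_mem I hxs) hyx
    have hWV : W ⊆ V := by
      intro y hy
      obtain ⟨p, hpP, hyp⟩ := Set.mem_iUnion₂.mp hy
      obtain ⟨x, _, hxp⟩ := Finset.mem_image.mp hpP
      rw [← hxp] at hyp
      exact hIsubV x hyp
    have hWzero : ∫ s in W, g s = 0 := by
      rw [hW, MeasureTheory.integral_biUnion_finset P (fun p _ => measurableSet_Ioo) ?_ ?_]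
      · apply Finset.sum_eq_zero
        intro p hpP
        obtain ⟨x, _, hxp⟩ := Finset.mem_image.mp hpP
        rw [← hxp]
        exact hIzero x
      · -- pairwise disjoint
        intro p hpP q hqP hpq
        obtain ⟨x, _, hxp⟩ := Finset.mem_image.mp hpP
        obtain ⟨y, _, hyq⟩ := Finset.mem_image.mp hqP
        rw [Function.onFun]
        by_contra hnd
        rw [← hxp, ← hyq] at hnd
        have := huniq x y hnd
        rw [← hxp, ← hyq] at hpq
        exact hpq (by rw [this])
      · intro p hpP
        obtain ⟨x, _, hxp⟩ := Finset.mem_image.mp hpP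
        rw [← hxp]
        exact hgV.mono_set (hIsubV x)
    have hgW : IntegrableOn g W volume := hgV.mono_set hWV
    have hd := MeasureTheory.integral_diff hWm hgV hWV
    have habs : ∫ s in V, g s = ∫ s in V \ W, g s := by linarith
    rw [habs]
    have h1 : |∫ s in V \ W, g s| ≤ ∫ s in V \ W, |g s| := by
      simpa [Real.norm_eq_abs] using
        MeasureTheory.norm_integral_le_integral_norm (μ := volume.restrict (V \ W)) g
    have h2 : ∫ s in V \ W, |g s| ≤ ∫ s in V \ K n, |g s| := by
      apply MeasureTheory.setIntegral_mono_set (hgVabs.mono_set Set.diff_subset)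
      · filter_upwards with s using abs_nonneg (g s)
      · exact HasSubset.Subset.eventuallyLE (Set.diff_subset_diff_right hKW)
    have h3 : ∫ s in V \ K n, |g s| = (∫ s in V, |g s|) - ∫ s in K n, |g s| :=
      MeasureTheory.integral_diff (hKclosed n).measurableSet hgVabs (hKV n)
    calc |∫ s in V \ W, g s| ≤ ∫ s in V \ W, |g s| := h1
      _ ≤ ∫ s in V \ K n, |g s| := h2
      _ = (∫ s in V, |g s|) - ∫ s in K n, |g s| := h3
  -- take the limit
  have htend : Tendsto (fun n => ∫ s in K n, |g s|) atTop (𝓝 (∫ s in V, |g s|)) := by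
    have := MeasureTheory.tendsto_setIntegral_of_monotone
      (f := fun s => |g s|) (μ := volume)
      (fun n => (hKclosed n).measurableSet) hKmono (by rw [hKunion]; exact hgVabs)
    rwa [hKunion] at this
  have htend2 : Tendsto (fun n => (∫ s in V, |g s|) - ∫ s in K n, |g s|) atTop (𝓝 0) := by
    have := (tendsto_const_nhds (x := ∫ s in V, |g s|) (f := atTop (α := ℕ))).sub htend
    simpa using this
  have : |∫ s in V, g s| ≤ 0 := ge_of_tendsto htend2 (Filter.Eventually.of_forall hest)
  have := abs_nonneg (∫ s in V, g s)
  have : |∫ s in V, g s| = 0 := le_antisymm ‹|∫ s in V, g s| ≤ 0› this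
  exact abs_eq_zero.mp this

/-- The running excess `∫_{U ∩ (0,t]} g` equals the positive part of the primitive. -/
lemma phi_formula {g : ℝ → ℝ} {T : ℝ} (hT : 0 ≤ T)
    (hg : IntervalIntegrable g volume 0 T)
    (hfT : (∫ s in (0:ℝ)..T, g s) ≤ 0) {t : ℝ} (ht : t ∈ Set.Icc 0 T) :
    ∫ s in Set.Ioc 0 t ∩ {u : ℝ | u ∈ Set.Ioo 0 T ∧ 0 < ∫ v in (0:ℝ)..u, g v}, g s
      = max (∫ s in (0:ℝ)..t, g s) 0 := by
  set F : ℝ → ℝ := fun u => ∫ v in (0:ℝ)..u, g v with hF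
  set U : Set ℝ := {u : ℝ | u ∈ Set.Ioo 0 T ∧ 0 < F u} with hU
  have hgsub : ∀ {x : ℝ}, 0 ≤ x → x ≤ T → IntervalIntegrable g volume 0 x := by
    intro x hx0 hxT
    apply hg.mono_set
    rw [Set.uIcc_of_le hx0, Set.uIcc_of_le hT]
    exact Set.Icc_subset_Icc le_rfl hxT
  have hset' : ∀ x, x ∈ Set.Icc 0 T → x ∉ U →
      Set.Ioc 0 x ∩ U = {u : ℝ | u ∈ Set.Ioo 0 x ∧ 0 < F u} := by
    intro x hx hxU
    ext u
    constructor
    · rintro ⟨hu1, hu2⟩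
      refine ⟨⟨hu1.1, lt_of_le_of_ne hu1.2 ?_⟩, hu2.2⟩
      rintro rfl
      exact hxU hu2
    · rintro ⟨hu1, hu2⟩
      exact ⟨⟨hu1.1, hu1.2.le⟩, ⟨⟨hu1.1, lt_of_lt_of_le hu1.2 hx.2⟩, hu2⟩⟩
  have hzero : ∀ x, x ∈ Set.Icc 0 T → F x ≤ 0 →
      ∫ s in Set.Ioc 0 x ∩ U, g s = 0 := by
    intro x hx hFx
    have hxU : x ∉ U := fun hmem => absurd hmem.2 (not_lt.mpr hFx)
    rw [hset' x hx hxU]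
    exact integral_posSet_eq_zero hx.1 (hgsub hx.1 hx.2) hFx
  by_cases htU : t ∈ U
  · -- t in an excursion
    obtain ⟨α, hα0, hαt, hFα, hαpos⟩ := exists_alpha hT hg (Set.Ioo_subset_Icc_self htU.1) htU.2
    have hsplit : Set.Ioc 0 t ∩ U = (Set.Ioc 0 α ∩ U) ∪ Set.Ioc α t := by
      ext u
      constructor
      · rintro ⟨hu1, hu2⟩
        rcases le_or_gt u α with h | h
        · exact Or.inl ⟨⟨hu1.1, h⟩, hu2⟩
        · exact Or.inr ⟨h, hu1.2⟩
      · rintro (⟨hu1, hu2⟩ | hu)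
        · exact ⟨⟨hu1.1, hu1.2.trans hαt.le⟩, hu2⟩
        · refine ⟨⟨lt_of_le_of_lt hα0 hu.1, hu.2⟩,
            ⟨⟨lt_of_le_of_lt hα0 hu.1, lt_of_le_of_lt hu.2 htU.1.2⟩, hαpos u hu⟩⟩
    have hdisj : Disjoint (Set.Ioc 0 α ∩ U) (Set.Ioc α t) := by
      rw [Set.disjoint_left]
      rintro u ⟨hu1, _⟩ hu2
      exact absurd hu1.2 (not_le.mpr hu2.1)
    have hUm : MeasurableSet U := (isOpen_posSet hT hg).measurableSet
    have hint1 : IntegrableOn g (Set.Ioc 0 α ∩ U) volume :=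
      hg.1.mono_set ((Set.inter_subset_left).trans
        (Set.Ioc_subset_Ioc le_rfl (hαt.le.trans (Set.Ioo_subset_Icc_self htU.1).2)))
    have hint2 : IntegrableOn g (Set.Ioc α t) volume :=
      hg.1.mono_set (Set.Ioc_subset_Ioc hα0 (Set.Ioo_subset_Icc_self htU.1).2)
    rw [hsplit, MeasureTheory.setIntegral_union hdisj measurableSet_Ioc hint1 hint2]
    have hz : ∫ s in Set.Ioc 0 α ∩ U, g s = 0 :=
      hzero α ⟨hα0, hαt.le.trans (Set.Ioo_subset_Icc_self htU.1).2⟩ (le_of_eq hFα)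
    have hlast : ∫ s in Set.Ioc α t, g s = F t := by
      have h0a : IntervalIntegrable g volume 0 α :=
        hgsub hα0 (hαt.le.trans (Set.Ioo_subset_Icc_self htU.1).2)
      have h0t : IntervalIntegrable g volume 0 t := hgsub ht.1 ht.2
      have key : ∫ s in α..t, g s = F t - F α :=
        (intervalIntegral.integral_interval_sub_left h0t h0a).symm
      have hFα' : F α = 0 := hFα
      rw [← intervalIntegral.integral_of_le hαt.le, key, hFα', sub_zero]
    rw [hz, hlast, zero_add, max_eq_left htU.2.le]
  · -- t not in an excursion: the integral vanishes
    have hFt : F t ≤ 0 := by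
      rcases eq_or_lt_of_le ht.1 with h | h
      · rw [← h]; simp [hF]
      · rcases eq_or_lt_of_le ht.2 with h2 | h2
        · rw [h2]; exact hfT
        · by_contra hpos
          exact htU ⟨⟨h, h2⟩, not_le.mp hpos⟩
    rw [hzero t ht hFt, max_eq_right hFt]

end TwoHopAux

set_option maxHeartbeats 1000000 in
/-- Theorem 3.1 (relay optimal policy): the two-hop maximum throughput equals the
maximum point-to-point throughput at the relay when the arrival data curve at the
relay is the first-hop optimal transmitted data curve `B*`. -/
theorem twoHop_decomposition
    (T : ℝ) (hT : 0 < T)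
    (Es Er Bs : ℝ → ℝ)
    (hEs_nonneg : ∀ t ∈ Set.Icc (0:ℝ) T, 0 ≤ Es t)
    (hEs_mono : MonotoneOn Es (Set.Icc 0 T))
    (hEr_nonneg : ∀ t ∈ Set.Icc (0:ℝ) T, 0 ≤ Er t)
    (hEr_mono : MonotoneOn Er (Set.Icc 0 T))
    (hBs_nonneg : ∀ t ∈ Set.Icc (0:ℝ) T, 0 ≤ Bs t)
    (hBs_mono : MonotoneOn Bs (Set.Icc 0 T))
    (rsr rrd : ℝ → ℝ)
    (hrsr : IsRateFunction rsr) (hrrd : IsRateFunction rrd)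
    (pstar : ℝ → ℝ) (hpstar : Feasible T Es Bs rsr pstar)
    (Bstar : ℝ → ℝ)
    (hBstar_def : ∀ t ∈ Set.Icc (0:ℝ) T, Bstar t = ∫ s in (0:ℝ)..t, rsr (pstar s))
    -- (i) `B*` is convex
    (hBstar_convex : ConvexOn ℝ (Set.Icc 0 T) Bstar)
    -- (ii) `B*` maximizes the final transmitted data over the first hop
    (hBstar_max : ∀ p : ℝ → ℝ, Feasible T Es Bs rsr p →
      (∫ s in (0:ℝ)..T, rsr (p s)) ≤ Bstar T)
    -- (iii) on every open subinterval of `[0,T]` on which `B*` is not affine,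
    -- `B*` pointwise dominates every feasible transmitted data curve
    (hBstar_ptwise : ∀ a b : ℝ, 0 ≤ a → a < b → b ≤ T →
      ¬ (∃ mc : ℝ × ℝ, ∀ t ∈ Set.Ioo a b, Bstar t = mc.1 * t + mc.2) →
      ∀ p : ℝ → ℝ, Feasible T Es Bs rsr p →
        ∀ t ∈ Set.Ioo a b, (∫ s in (0:ℝ)..t, rsr (p s)) ≤ Bstar t) :
    sSup {x : ℝ | ∃ psr prd : ℝ → ℝ,
        TwoHopFeasible T Es Er Bs rsr rrd psr prd ∧
        x = ∫ t in (0:ℝ)..T, rrd (prd t)} =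
    sSup {x : ℝ | ∃ p : ℝ → ℝ, Feasible T Er Bstar rrd p ∧
        x = ∫ t in (0:ℝ)..T, rrd (p t)} := by
  classical
  obtain ⟨hrsr_cont, hrsr_mono, hrsr_conc, hrsr_zero, hrsr_top⟩ := hrsr
  obtain ⟨hrrd_cont, hrrd_mono, hrrd_conc, hrrd_zero, hrrd_top⟩ := hrrd
  obtain ⟨hp1, hp2, hp3, hp4, hp5⟩ := hpstar
  set S1 : Set ℝ := {x : ℝ | ∃ psr prd : ℝ → ℝ,
      TwoHopFeasible T Es Er Bs rsr rrd psr prd ∧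
      x = ∫ t in (0:ℝ)..T, rrd (prd t)} with hS1def
  set S2 : Set ℝ := {x : ℝ | ∃ p : ℝ → ℝ, Feasible T Er Bstar rrd p ∧
      x = ∫ t in (0:ℝ)..T, rrd (p t)} with hS2def
  -- B* is nonnegative on [0,T]
  have hBstar_nonneg : ∀ t ∈ Set.Icc (0:ℝ) T, 0 ≤ Bstar t := by
    intro t ht
    rw [hBstar_def t ht]
    apply intervalIntegral.integral_nonneg ht.1
    intro u hu
    have hu' : (0:ℝ) ≤ pstar u := hp3 u ⟨hu.1, hu.2.trans ht.2⟩
    calc (0:ℝ) = rsr 0 := hrsr_zero.symm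
      _ ≤ rsr (pstar u) := hrsr_mono.monotoneOn Set.self_mem_Ici hu' hu'
  -- S2 ⊆ S1 by pairing with pstar
  have hS2S1 : S2 ⊆ S1 := by
    rintro x ⟨p, ⟨hq1, hq2, hq3, hq4, hq5⟩, rfl⟩
    refine ⟨pstar, p, ⟨hp1, hq1, hp2, hq2, ?_, hp4, hq4, hp5, ?_⟩, rfl⟩
    · exact fun t ht => ⟨hp3 t ht, hq3 t ht⟩
    · intro t ht
      rw [← hBstar_def t ht]
      exact hq5 t ht
  -- the zero policy is relay-feasible
  have hS2ne : S2.Nonempty := by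
    refine ⟨_, ⟨fun _ => (0:ℝ), ⟨intervalIntegrable_const, ?_, ?_, ?_, ?_⟩, rfl⟩⟩
    · simp only [hrrd_zero]
      exact intervalIntegrable_const
    · exact fun t _ => le_rfl
    · intro t ht
      simpa using hEr_nonneg t ht
    · intro t ht
      have : (∫ s in (0:ℝ)..t, rrd ((fun _ => (0:ℝ)) s)) = 0 := by
        simp [hrrd_zero]
      rw [this]
      exact hBstar_nonneg t ht
  have hS1ne : S1.Nonempty := hS2ne.imp (fun x hx => hS2S1 hx)
  -- every two-hop value is dominated by a relay-feasible value
  have hdom : ∀ x ∈ S1, ∃ y ∈ S2, x ≤ y := by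
    rintro x ⟨psr, prd, ⟨h1, h2, h3, h4, h5, h6, h7, h8, h9⟩, rfl⟩
    have hpsrFeas : Feasible T Es Bs rsr psr :=
      ⟨h1, h3, fun t ht => (h5 t ht).1, h6, h8⟩
    by_cases haff : ∃ mc : ℝ × ℝ, ∀ t ∈ Set.Ioo (0:ℝ) T, Bstar t = mc.1 * t + mc.2
    · -- affine case: modify prd
      obtain ⟨mc, hmc⟩ := haff
      set m := mc.1 with hmdef
      have hprim_cont : ContinuousOn (fun u => ∫ s in (0:ℝ)..u, rsr (pstar s)) (Set.Icc 0 T) :=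
        TwoHopAux.contPrimitive hT.le hp2
      have hBcont : ContinuousOn Bstar (Set.Icc 0 T) :=
        hprim_cont.congr hBstar_def
      have hB0 : Bstar 0 = 0 := by
        rw [hBstar_def 0 ⟨le_rfl, hT.le⟩, intervalIntegral.integral_same]
      have hend : ∀ z ∈ Set.Icc (0:ℝ) T, Bstar z = m * z + mc.2 := by
        intro z hz
        by_cases hzIoo : z ∈ Set.Ioo (0:ℝ) T
        · exact hmc z hzIoo
        · haveI : (𝓝[Set.Ioo (0:ℝ) T] z).NeBot := by
            apply mem_closure_iff_nhdsWithin_neBot.mp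
            rw [closure_Ioo hT.ne]
            exact hz
          have l1 : Filter.Tendsto Bstar (𝓝[Set.Ioo (0:ℝ) T] z) (𝓝 (Bstar z)) :=
            (hBcont z hz).mono_left (nhdsWithin_mono z Set.Ioo_subset_Icc_self)
          have l2 : Filter.Tendsto (fun u => m * u + mc.2) (𝓝[Set.Ioo (0:ℝ) T] z)
              (𝓝 (m * z + mc.2)) :=
            (((continuous_const.mul continuous_id).add continuous_const).tendsto z).mono_left
              nhdsWithin_le_nhds
          have l3 : Filter.Tendsto Bstar (𝓝[Set.Ioo (0:ℝ) T] z) (𝓝 (m * z + mc.2)) := by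
            apply l2.congr'
            filter_upwards [self_mem_nhdsWithin] with u hu
            exact (hmc u hu).symm
          exact tendsto_nhds_unique l1 l3
      have hc2 : mc.2 = 0 := by
        have := hend 0 ⟨le_rfl, hT.le⟩
        rw [hB0] at this
        linarith
      have hBlin : ∀ z ∈ Set.Icc (0:ℝ) T, Bstar z = m * z := by
        intro z hz
        rw [hend z hz, hc2, add_zero]
      have hm0 : 0 ≤ m := by
        have h1' := hBlin T ⟨hT.le, le_rfl⟩
        have h2' := hBstar_nonneg T ⟨hT.le, le_rfl⟩
        nlinarith
      -- a power level achieving rate m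
      obtain ⟨y0, hy0⟩ := Filter.eventually_atTop.mp (hrrd_top.eventually_ge_atTop m)
      have hy1 : m ≤ rrd (max y0 0) := hy0 _ (le_max_left _ _)
      obtain ⟨c0, hc0mem, hc0⟩ : ∃ c0 ∈ Set.Icc (0:ℝ) (max y0 0), rrd c0 = m := by
        have hsub : Set.Icc (0:ℝ) (max y0 0) ⊆ Set.Ici (0:ℝ) := fun u hu => hu.1
        have hIVT := intermediate_value_Icc (le_max_right y0 0) (hrrd_cont.mono hsub)
        have hmem : m ∈ Set.Icc (rrd 0) (rrd (max y0 0)) := by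
          rw [hrrd_zero]; exact ⟨hm0, hy1⟩
        obtain ⟨c0, hc0m, hc0⟩ := hIVT hmem
        exact ⟨c0, hc0m, hc0⟩
      have hc00 : (0:ℝ) ≤ c0 := hc0mem.1
      -- setup
      set hfun : ℝ → ℝ := fun s => rrd (prd s) with hhdef
      set g : ℝ → ℝ := fun s => hfun s - m with hgdef
      have hg_int : IntervalIntegrable g volume 0 T := h4.sub intervalIntegrable_const
      set F : ℝ → ℝ := fun u => ∫ s in (0:ℝ)..u, g s with hFdef
      have hsubint : ∀ {φ : ℝ → ℝ}, IntervalIntegrable φ volume 0 T →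
          ∀ {x : ℝ}, 0 ≤ x → x ≤ T → IntervalIntegrable φ volume 0 x := by
        intro φ hφ x hx0 hxT
        apply hφ.mono_set
        rw [Set.uIcc_of_le hx0, Set.uIcc_of_le hT.le]
        exact Set.Icc_subset_Icc le_rfl hxT
      have hFval : ∀ x, 0 ≤ x → x ≤ T → F x = (∫ s in (0:ℝ)..x, hfun s) - m * x := by
        intro x hx0 hxT
        show (∫ s in (0:ℝ)..x, (hfun s - m)) = _
        rw [intervalIntegral.integral_sub (hsubint h4 hx0 hxT) intervalIntegrable_const,
          intervalIntegral.integral_const]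
        simp [mul_comm]
      have hFT : F T ≤ 0 := by
        have d1 : (∫ s in (0:ℝ)..T, hfun s) ≤ ∫ s in (0:ℝ)..T, rsr (psr s) :=
          h9 T ⟨hT.le, le_rfl⟩
        have d2 := hBstar_max psr hpsrFeas
        have d3 := hBlin T ⟨hT.le, le_rfl⟩
        rw [hFval T hT.le le_rfl]
        linarith
      set U : Set ℝ := {u : ℝ | u ∈ Set.Ioo 0 T ∧ 0 < F u} with hUdef
      have hUopen : IsOpen U := TwoHopAux.isOpen_posSet hT.le hg_int
      have hUm : MeasurableSet U := hUopen.measurableSet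
      have hphi : ∀ t ∈ Set.Icc (0:ℝ) T, ∫ s in Set.Ioc 0 t ∩ U, g s = max (F t) 0 :=
        fun t ht => TwoHopAux.phi_formula hT.le hg_int hFT ht
      set q : ℝ → ℝ := fun s => if s ∈ U then c0 else prd s with hqdef
      have hprdIoc : IntegrableOn prd (Set.Ioc 0 T) volume := h2.1
      have hhIoc : IntegrableOn hfun (Set.Ioc 0 T) volume := h4.1
      have hq_int : IntervalIntegrable q volume 0 T := by
        rw [intervalIntegrable_iff_integrableOn_Ioc_of_le hT.le]
        have hq_eq : q = U.piecewise (fun _ => c0) prd := by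
          funext s
          by_cases hs : s ∈ U <;> simp [hqdef, Set.piecewise, hs]
        rw [hq_eq]
        apply MeasureTheory.Integrable.piecewise hUm
        · apply (MeasureTheory.integrableOn_const_iff (C := c0)).mpr
          right
          rw [Measure.restrict_apply hUm]
          exact lt_of_le_of_lt (measure_mono Set.inter_subset_right) measure_Ioc_lt_top
        · exact hprdIoc.integrableOn
      have hrq_int : IntervalIntegrable (fun s => rrd (q s)) volume 0 T := by
        rw [intervalIntegrable_iff_integrableOn_Ioc_of_le hT.le]
        have hrq_eq : (fun s => rrd (q s)) = U.piecewise (fun _ => m) hfun := by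
          funext s
          by_cases hs : s ∈ U <;> simp [hqdef, Set.piecewise, hs, hc0, hhdef]
        rw [hrq_eq]
        apply MeasureTheory.Integrable.piecewise hUm
        · apply (MeasureTheory.integrableOn_const_iff (C := m)).mpr
          right
          rw [Measure.restrict_apply hUm]
          exact lt_of_le_of_lt (measure_mono Set.inter_subset_right) measure_Ioc_lt_top
        · exact hhIoc.integrableOn
      -- main pointwise-in-time computations
      have hmain : ∀ t ∈ Set.Icc (0:ℝ) T,
          (∫ s in (0:ℝ)..t, rrd (q s)) = (∫ s in (0:ℝ)..t, hfun s) - max (F t) 0 ∧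
          (∫ s in (0:ℝ)..t, q s) ≤ ∫ s in (0:ℝ)..t, prd s := by
        intro t ht
        set A : Set ℝ := Set.Ioc 0 t ∩ U with hAdef
        have hAm : MeasurableSet A := measurableSet_Ioc.inter hUm
        have hAsub : A ⊆ Set.Ioc 0 T :=
          Set.inter_subset_left.trans (Set.Ioc_subset_Ioc le_rfl ht.2)
        have hAsub' : A ⊆ Set.Icc 0 T := hAsub.trans Set.Ioc_subset_Icc_self
        have hAvollt : volume A < ⊤ := lt_of_le_of_lt (measure_mono hAsub) measure_Ioc_lt_top
        have hAvolfin : volume A ≠ ⊤ := hAvollt.ne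
        have hprdA : IntegrableOn prd A volume := hprdIoc.mono_set hAsub
        have hhA : IntegrableOn hfun A volume := hhIoc.mono_set hAsub
        have hqIoct : IntegrableOn q (Set.Ioc 0 t) volume :=
          hq_int.1.mono_set (Set.Ioc_subset_Ioc le_rfl ht.2)
        have hrqIoct : IntegrableOn (fun s => rrd (q s)) (Set.Ioc 0 t) volume :=
          hrq_int.1.mono_set (Set.Ioc_subset_Ioc le_rfl ht.2)
        have hhIoct : IntegrableOn hfun (Set.Ioc 0 t) volume :=
          hhIoc.mono_set (Set.Ioc_subset_Ioc le_rfl ht.2)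
        have hprdIoct : IntegrableOn prd (Set.Ioc 0 t) volume :=
          hprdIoc.mono_set (Set.Ioc_subset_Ioc le_rfl ht.2)
        have hphiA : (∫ s in A, hfun s) - (volume A).toReal * m = max (F t) 0 := by
          have e1 : ∫ s in A, g s = (∫ s in A, hfun s) - ∫ s in A, (fun _ : ℝ => m) s :=
            MeasureTheory.integral_sub hhA
              ((MeasureTheory.integrableOn_const_iff (C := m)).mpr (Or.inr hAvollt))
          have e2 : ∫ s in A, (fun _ : ℝ => m) s = (volume A).toReal * m := by
            rw [MeasureTheory.setIntegral_const]
            exact smul_eq_mul _ _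
          have e3 : ∫ s in A, g s = max (F t) 0 := hphi t ht
          linarith
        have c1 : ∫ s in A, rrd (q s) = (volume A).toReal * m := by
          have hEq : ∀ s ∈ A, rrd (q s) = m := by
            intro s hs
            simp [hqdef, hs.2, hc0]
          rw [MeasureTheory.setIntegral_congr_fun hAm hEq, MeasureTheory.setIntegral_const]
          exact smul_eq_mul _ _
        have c2 : ∫ s in Set.Ioc 0 t \ U, rrd (q s) = ∫ s in Set.Ioc 0 t \ U, hfun s := by
          apply MeasureTheory.setIntegral_congr_fun (measurableSet_Ioc.diff hUm)
          intro s hs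
          simp [hqdef, hs.2, hhdef]
        have c3 : (∫ s in A, rrd (q s)) + (∫ s in Set.Ioc 0 t \ U, rrd (q s))
            = ∫ s in Set.Ioc 0 t, rrd (q s) :=
          MeasureTheory.integral_inter_add_diff hUm hrqIoct
        have c4 : (∫ s in A, hfun s) + (∫ s in Set.Ioc 0 t \ U, hfun s)
            = ∫ s in Set.Ioc 0 t, hfun s :=
          MeasureTheory.integral_inter_add_diff hUm hhIoct
        have c5 : ∫ s in (0:ℝ)..t, rrd (q s) = ∫ s in Set.Ioc 0 t, rrd (q s) :=
          intervalIntegral.integral_of_le ht.1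
        have c6 : ∫ s in (0:ℝ)..t, hfun s = ∫ s in Set.Ioc 0 t, hfun s :=
          intervalIntegral.integral_of_le ht.1
        constructor
        · linarith
        · have b1 : (∫ s in A, q s) + (∫ s in Set.Ioc 0 t \ U, q s)
              = ∫ s in Set.Ioc 0 t, q s := MeasureTheory.integral_inter_add_diff hUm hqIoct
          have b2 : ∫ s in A, q s = (volume A).toReal * c0 := by
            have hEq : ∀ s ∈ A, q s = c0 := fun s hs => by simp [hqdef, hs.2]
            rw [MeasureTheory.setIntegral_congr_fun hAm hEq, MeasureTheory.setIntegral_const]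
            exact smul_eq_mul _ _
          have b3 : ∫ s in Set.Ioc 0 t \ U, q s = ∫ s in Set.Ioc 0 t \ U, prd s := by
            apply MeasureTheory.setIntegral_congr_fun (measurableSet_Ioc.diff hUm)
            intro s hs
            simp [hqdef, hs.2]
          have b4 : (∫ s in A, prd s) + (∫ s in Set.Ioc 0 t \ U, prd s)
              = ∫ s in Set.Ioc 0 t, prd s := MeasureTheory.integral_inter_add_diff hUm hprdIoct
          have b5 : (volume A).toReal * c0 ≤ ∫ s in A, prd s := by
            by_cases hA0 : volume A = 0
            · have hz : volume.restrict A = 0 := Measure.restrict_eq_zero.mpr hA0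
              rw [hA0, hz]
              simp
            · have hvolpos : 0 < (volume A).toReal := ENNReal.toReal_pos hA0 hAvolfin
              have hmle : m * (volume A).toReal ≤ ∫ s in A, hfun s := by
                have hmax := le_max_right (F t) 0
                linarith
              have hae : ∀ᵐ x ∂(volume.restrict A), prd x ∈ Set.Ici (0:ℝ) :=
                MeasureTheory.ae_restrict_of_forall_mem hAm
                  (fun x hx => (h5 x (hAsub' hx)).2)
              have havg : (⨍ x in A, hfun x) ≤ rrd (⨍ x in A, prd x) :=
                ConcaveOn.le_map_set_average hrrd_conc hrrd_cont isClosed_Ici hA0 hAvolfin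
                  hae hprdA hhA
              have havg1 : (⨍ x in A, hfun x) = (volume A).toReal⁻¹ * ∫ x in A, hfun x := by
                rw [MeasureTheory.setAverage_eq]
                exact smul_eq_mul _ _
              have havg2 : (⨍ x in A, prd x) = (volume A).toReal⁻¹ * ∫ x in A, prd x := by
                rw [MeasureTheory.setAverage_eq]
                exact smul_eq_mul _ _
              have hintnn : 0 ≤ ∫ x in A, prd x :=
                MeasureTheory.setIntegral_nonneg hAm (fun x hx => (h5 x (hAsub' hx)).2)
              have hm_le_avg : m ≤ rrd (⨍ x in A, prd x) := by
                refine le_trans ?_ havg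
                rw [havg1]
                have hstep := mul_le_mul_of_nonneg_left hmle
                  (le_of_lt (inv_pos.mpr hvolpos))
                have heq : (volume A).toReal⁻¹ * (m * (volume A).toReal) = m := by
                  field_simp
                linarith
              have havgmem : (⨍ x in A, prd x) ∈ Set.Ici (0:ℝ) := by
                rw [havg2]
                exact Set.mem_Ici.mpr (mul_nonneg (inv_nonneg.mpr hvolpos.le) hintnn)
              have hc0avg : c0 ≤ ⨍ x in A, prd x := by
                by_contra hlt
                push_neg at hlt
                have hmono := hrrd_mono havgmem (Set.mem_Ici.mpr hc00) hlt
                rw [hc0] at hmono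
                linarith
              calc (volume A).toReal * c0
                  ≤ (volume A).toReal * (⨍ x in A, prd x) :=
                    mul_le_mul_of_nonneg_left hc0avg hvolpos.le
                _ = ∫ x in A, prd x := by
                    rw [havg2]
                    field_simp
          have b6 : ∫ s in (0:ℝ)..t, q s = ∫ s in Set.Ioc 0 t, q s :=
            intervalIntegral.integral_of_le ht.1
          have b7 : ∫ s in (0:ℝ)..t, prd s = ∫ s in Set.Ioc 0 t, prd s :=
            intervalIntegral.integral_of_le ht.1
          linarith
      refine ⟨∫ t' in (0:ℝ)..T, rrd (q t'), ⟨q, ⟨hq_int, hrq_int, ?_, ?_, ?_⟩, rfl⟩, ?_⟩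
      · intro t ht
        by_cases hs : t ∈ U
        · simpa [hqdef, hs] using hc00
        · simpa [hqdef, hs] using (h5 t ht).2
      · intro t ht
        exact (hmain t ht).2.trans (h7 t ht)
      · intro t ht
        rw [(hmain t ht).1, hBlin t ht]
        have hFv := hFval t ht.1 ht.2
        have hmax := le_max_left (F t) 0
        linarith
      · have hval := (hmain T ⟨hT.le, le_rfl⟩).1
        rw [max_eq_right hFT, sub_zero] at hval
        rw [hval]
    · -- non-affine case: prd itself is feasible for (Er, B*, rrd)
      refine ⟨_, ⟨prd, ⟨h2, h4, fun t ht => (h5 t ht).2, h7, ?_⟩, rfl⟩, le_rfl⟩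
      intro t ht
      rcases eq_or_lt_of_le ht.1 with h0 | h0
      · rw [← h0, intervalIntegral.integral_same]
        exact hBstar_nonneg 0 ⟨le_rfl, hT.le⟩
      · rcases eq_or_lt_of_le ht.2 with hT' | hT'
        · rw [hT']
          exact (h9 T ⟨hT.le, le_rfl⟩).trans (hBstar_max psr hpsrFeas)
        · exact (h9 t ht).trans
            (hBstar_ptwise 0 T le_rfl hT le_rfl haff psr hpsrFeas t ⟨h0, hT'⟩)
  -- conclude
  by_cases hbdd : BddAbove S1
  · apply le_antisymm
    · apply csSup_le hS1ne
      intro x hx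
      obtain ⟨y, hy, hxy⟩ := hdom x hx
      exact hxy.trans (le_csSup (hbdd.mono hS2S1) hy)
    · exact csSup_le_csSup hbdd hS2ne hS2S1
  · have hbdd2 : ¬ BddAbove S2 := by
      intro ⟨M, hM⟩
      apply hbdd
      refine ⟨M, fun x hx => ?_⟩
      obtain ⟨y, hy, hxy⟩ := hdom x hx
      exact hxy.trans (hM hy)
    rw [Real.sSup_of_not_bddAbove hbdd, Real.sSup_of_not_bddAbove hbdd2]
end
end

section
/- Let T > 0, let E_s : [0,T] → [0,∞) be nondecreasing, B_s : [0,T] → [0,∞) nondecreasing, and r_sr a rate function. Let B* : [0,T] → [0,∞) be convex, nondecreasing and piecewise continuously differentiable with B*(0) = 0, B*(t) ≤ B_s(t) and ∫₀ᵗ r_sr⁻¹(B*'(s)) ds ≤ E_s(t) for all t ∈ [0,T]. Let D₀ ∈ [0, B*(T)] and let l(t) = D₀ + m·(t − T) be an affine function satisfying l(t) ≤ B*(t) for all t ∈ [0,T] and l(T₁) = B*(T₁) for some T₁ ∈ [0,T] (l is the tangent line to B* through the point (T, D₀)). Define B̂(t) = B*(t) for 0 ≤ t ≤ T₁ and B̂(t)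 = l(t) for T₁ ≤ t ≤ T. Then B̂ is nondecreasing and convex, and B̂ is itself a feasible source transmitted data curve: B̂(t) ≤ B_s(t) and ∫₀ᵗ r_sr⁻¹(B̂'(s)) ds ≤ E_s(t) for all t ∈ [0,T]. -/
open MeasureTheory Set Filter intervalIntegral

noncomputable section

/-- `φ` is the inverse of the rate function `r` on `[0,∞)`. -/
def IsInverseOn (φ r : ℝ → ℝ) : Prop :=
  (∀ p : ℝ, 0 ≤ p → φ (r p) = p) ∧ (∀ y : ℝ, 0 ≤ y → r (φ y) = y) ∧
    (∀ y : ℝ, 0 ≤ y → 0 ≤ φ y)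

/-- `f` is piecewise continuously differentiable on `[a,b]` with derivative `f'`:
`f` is continuous, differentiable with derivative `f'` off a finite set, and `f'`
is piecewise continuous and bounded. -/
def PiecewiseC1On (a b : ℝ) (f f' : ℝ → ℝ) : Prop :=
  ContinuousOn f (Set.Icc a b) ∧
  (∃ s : Finset ℝ, (∀ t ∈ Set.Ioo a b, t ∉ s → HasDerivAt f (f' t) t) ∧
    ContinuousOn f' (Set.Icc a b \ (s : Set ℝ))) ∧
  (∃ M : ℝ, ∀ t ∈ Set.Icc a b, |f' t| ≤ M)

open Topology in
private lemma deriv_ge_of_slope {f : ℝ → ℝ} {d x b c : ℝ} (hxb : x < b)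
    (hd : HasDerivAt f d x) (h : ∀ y, x < y → y < b → c * (y - x) ≤ f y - f x) : c ≤ d := by
  have hs : Filter.Tendsto (slope f x) (𝓝[>] x) (𝓝 d) :=
    (hasDerivAt_iff_tendsto_slope.mp hd).mono_left
      (nhdsWithin_mono x fun y hy => Set.mem_compl_singleton_iff.mpr (ne_of_gt hy))
  refine ge_of_tendsto hs ?_
  filter_upwards [Ioo_mem_nhdsGT_of_mem ⟨le_refl x, hxb⟩] with y hy
  rw [slope_def_field, le_div_iff₀ (by linarith [hy.1])]
  exact h y hy.1 hy.2

/-- Step 1 in the proof of Theorem 3.2: the truncated-tangent-line source policy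
`B̂` is nondecreasing, convex, and is a feasible transmitted data curve for
`(E_s, B_s, r_sr)`. -/
theorem truncated_tangent_policy_feasible
    (T : ℝ) (hT : 0 < T)
    (Es Bs : ℝ → ℝ)
    (hEs_nonneg : ∀ t ∈ Set.Icc (0:ℝ) T, 0 ≤ Es t)
    (hEs_mono : MonotoneOn Es (Set.Icc 0 T))
    (hBs_nonneg : ∀ t ∈ Set.Icc (0:ℝ) T, 0 ≤ Bs t)
    (hBs_mono : MonotoneOn Bs (Set.Icc 0 T))
    (rsr φ : ℝ → ℝ) (hrsr : IsRateFunction rsr) (hφ : IsInverseOn φ rsr)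
    (Bstar Bstar' : ℝ → ℝ)
    (hBstar_convex : ConvexOn ℝ (Set.Icc 0 T) Bstar)
    (hBstar_mono : MonotoneOn Bstar (Set.Icc 0 T))
    (hBstar_nonneg : ∀ t ∈ Set.Icc (0:ℝ) T, 0 ≤ Bstar t)
    (hBstar_pc1 : PiecewiseC1On 0 T Bstar Bstar')
    (hBstar_zero : Bstar 0 = 0)
    (hBstar_data : ∀ t ∈ Set.Icc (0:ℝ) T, Bstar t ≤ Bs t)
    (hBstar_energy : ∀ t ∈ Set.Icc (0:ℝ) T, (∫ s in (0:ℝ)..t, φ (Bstar' s)) ≤ Es t)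
    (D₀ m : ℝ) (hD₀ : D₀ ∈ Set.Icc 0 (Bstar T))
    (T₁ : ℝ) (hT₁ : T₁ ∈ Set.Icc (0:ℝ) T)
    -- `l t = D₀ + m (t - T)` is the tangent line to `B*` through `(T, D₀)`
    (hl_le : ∀ t ∈ Set.Icc (0:ℝ) T, D₀ + m * (t - T) ≤ Bstar t)
    (hl_touch : D₀ + m * (T₁ - T) = Bstar T₁)
    (Bhat Bhat' : ℝ → ℝ)
    (hBhat_def : ∀ t, Bhat t = if t ≤ T₁ then Bstar t else D₀ + m * (t - T))
    (hBhat'_def : ∀ t, Bhat' t = if t ≤ T₁ then Bstar' t else m) :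
    MonotoneOn Bhat (Set.Icc 0 T) ∧
    ConvexOn ℝ (Set.Icc 0 T) Bhat ∧
    (∀ t ∈ Set.Icc (0:ℝ) T, Bhat t ≤ Bs t) ∧
    (∀ t ∈ Set.Icc (0:ℝ) T, (∫ s in (0:ℝ)..t, φ (Bhat' s)) ≤ Es t) := by
  obtain ⟨hr_cont, hr_mono, hr_conc, hr_zero, hr_top⟩ := hrsr
  obtain ⟨hφr, hrφ, hφ0⟩ := hφ
  obtain ⟨hBc, ⟨S, hderiv, hcont'⟩, ⟨M, hM⟩⟩ := hBstar_pc1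
  have hT₁0 : (0:ℝ) ≤ T₁ := hT₁.1
  have hT₁T : T₁ ≤ T := hT₁.2
  have hφ_mono : ∀ {y₁ y₂ : ℝ}, 0 ≤ y₁ → y₁ ≤ y₂ → φ y₁ ≤ φ y₂ := by
    intro y₁ y₂ h1 h12
    by_contra h
    push_neg at h
    have := hr_mono (hφ0 y₂ (h1.trans h12)) (hφ0 y₁ h1) h
    rw [hrφ y₁ h1, hrφ y₂ (h1.trans h12)] at this
    linarith
  have hm0 : 0 ≤ m := by
    have h0 := hl_le 0 ⟨le_refl 0, hT.le⟩
    rw [hBstar_zero] at h0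
    nlinarith [hD₀.1]
  -- data bound: Bhat ≤ Bstar on Icc
  have hhat_le : ∀ t ∈ Set.Icc (0:ℝ) T, Bhat t ≤ Bstar t := by
    intro t ht
    rw [hBhat_def t]
    by_cases h : t ≤ T₁
    · rw [if_pos h]
    · rw [if_neg h]; exact hl_le t ht
  -- monotone
  have hmono : MonotoneOn Bhat (Set.Icc 0 T) := by
    intro x hx y hy hxy
    rw [hBhat_def x, hBhat_def y]
    by_cases hyT : y ≤ T₁
    · rw [if_pos (hxy.trans hyT), if_pos hyT]
      exact hBstar_mono hx hy hxy
    · rw [if_neg hyT]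
      push_neg at hyT
      by_cases hxT : x ≤ T₁
      · rw [if_pos hxT]
        calc Bstar x ≤ Bstar T₁ := hBstar_mono hx hT₁ hxT
          _ = D₀ + m * (T₁ - T) := hl_touch.symm
          _ ≤ D₀ + m * (y - T) := by nlinarith
      · rw [if_neg hxT]; nlinarith
  -- convex
  have hconv : ConvexOn ℝ (Set.Icc 0 T) Bhat := by
    rw [convexOn_iff_slope_mono_adjacent]
    refine ⟨convex_Icc 0 T, ?_⟩
    intro x y z hx hz hxy hyz
    have hy : y ∈ Set.Icc (0:ℝ) T := ⟨hx.1.trans hxy.le, hyz.le.trans hz.2⟩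
    rw [hBhat_def x, hBhat_def y, hBhat_def z]
    by_cases hzT : z ≤ T₁
    · rw [if_pos (hxy.le.trans (hyz.le.trans hzT)), if_pos (hyz.le.trans hzT), if_pos hzT]
      exact hBstar_convex.slope_mono_adjacent hx hz hxy hyz
    · rw [if_neg hzT]
      push_neg at hzT
      by_cases hyT : y ≤ T₁
      · rw [if_pos (hxy.le.trans hyT), if_pos hyT]
        -- x < y ≤ T₁ < z
        have hlx := hl_le x hx
        have hQ : 0 ≤ Bstar y - (D₀ + m * (y - T)) := by
          have := hl_le y hy; linarith
        rw [div_le_div_iff₀ (by linarith) (by linarith)]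
        rcases eq_or_lt_of_le hyT with heq | hlt
        · subst heq
          -- (Bstar y - Bstar x)(z-y) ≤ (l z - Bstar y)(y-x)
          nlinarith [mul_nonneg (by nlinarith [hl_touch] : (0:ℝ) ≤ m * (y - x) - (Bstar y - Bstar x)) (by linarith : (0:ℝ) ≤ z - y)]
        · -- x < y < T₁ < z
          have hs1 := hBstar_convex.slope_mono_adjacent hx hT₁ hxy hlt
          rw [div_le_div_iff₀ (by linarith) (by linarith)] at hs1
          -- hs1 : (Bstar y - Bstar x) * (T₁ - y) ≤ (Bstar T₁ - Bstar y) * (y - x)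
          -- s1 ≤ s2 : (Bstar T₁ - Bstar y)*(z - y) ≤ (l z - Bstar y)*(T₁ - y)
          have hs2 : (Bstar T₁ - Bstar y) * (z - y) ≤ (D₀ + m * (z - T) - Bstar y) * (T₁ - y) := by
            nlinarith [mul_nonneg hQ (by linarith : (0:ℝ) ≤ z - T₁), hl_touch]
          -- combine: need (Bstar y - Bstar x)*(z-y) ≤ (lz - Bstar y)*(y-x)
          nlinarith [mul_pos (by linarith : (0:ℝ) < T₁ - y) (by linarith : (0:ℝ) < z - y),
            mul_nonneg (mul_nonneg hQ (by linarith : (0:ℝ) ≤ y - x)) (by linarith : (0:ℝ) ≤ z - T₁)]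
      · rw [if_neg hyT]
        push_neg at hyT
        by_cases hxT : x ≤ T₁
        · rw [if_pos hxT]
          have hlx := hl_le x hx
          rw [div_le_div_iff₀ (by linarith) (by linarith)]
          nlinarith [mul_nonneg (by linarith : (0:ℝ) ≤ Bstar x - (D₀ + m * (x - T))) (by linarith : (0:ℝ) ≤ z - y)]
        · rw [if_neg hxT]
          rw [div_le_div_iff₀ (by linarith) (by linarith)]
          ring_nf
          nlinarith
  refine ⟨hmono, hconv, fun t ht => (hhat_le t ht).trans (hBstar_data t ht), ?_⟩
  -- derivative lower bounds
  have hd_nonneg : ∀ x ∈ Set.Ioo (0:ℝ) T, x ∉ S → 0 ≤ Bstar' x := by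
    intro x hx hxS
    refine deriv_ge_of_slope hx.2 (hderiv x hx hxS) ?_
    intro y hxy hyT
    have := hBstar_mono ⟨hx.1.le, hx.2.le⟩ ⟨hx.1.le.trans hxy.le, hyT.le⟩ hxy.le
    nlinarith
  have hd_ge_m : ∀ x ∈ Set.Ioo T₁ T, x ∉ S → m ≤ Bstar' x := by
    intro x hx hxS
    have hx' : x ∈ Set.Ioo (0:ℝ) T := ⟨lt_of_le_of_lt hT₁0 hx.1, hx.2⟩
    refine deriv_ge_of_slope hx.2 (hderiv x hx' hxS) ?_
    intro y hxy hyT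
    have hsl := hBstar_convex.slope_mono_adjacent hT₁
      (⟨by linarith [hx'.1], hyT.le⟩ : y ∈ Set.Icc (0:ℝ) T) hx.1 hxy
    rw [div_le_div_iff₀ (by linarith [hx.1]) (by linarith)] at hsl
    have hlx := hl_le x ⟨hx'.1.le, hx.2.le⟩
    have h1 : m * (x - T₁) ≤ Bstar x - Bstar T₁ := by nlinarith [hl_touch]
    nlinarith [hx.1, mul_le_mul_of_nonneg_right h1 (by linarith : (0:ℝ) ≤ y - x)]
  -- measurability and integrability of the energy integrand
  have hSmeas : MeasurableSet (↑S : Set ℝ) := S.finite_toSet.measurableSet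
  have hSnull : volume (↑S : Set ℝ) = 0 := S.finite_toSet.measure_zero _
  have hrestr : volume.restrict (Set.Icc 0 T \ (↑S : Set ℝ)) = volume.restrict (Set.Icc (0:ℝ) T) := by
    refine Measure.restrict_congr_set (diff_ae_eq_self.mpr ?_)
    exact measure_mono_null Set.inter_subset_right hSnull
  have hB'meas : AEMeasurable Bstar' (volume.restrict (Set.Icc (0:ℝ) T)) := by
    have h := hcont'.aemeasurable (μ := volume) (measurableSet_Icc.diff hSmeas)
    rwa [hrestr] at h
  set ψ : ℝ → ℝ := fun y => φ (max y 0) with hψdef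
  have hψ_mono : Monotone ψ := fun a b hab => hφ_mono (le_max_right _ _) (max_le_max hab le_rfl)
  set g : ℝ → ℝ := fun s => ψ (Bstar' s) with hgdef
  have hg_meas : AEStronglyMeasurable g (volume.restrict (Set.Icc (0:ℝ) T)) :=
    (hψ_mono.measurable.comp_aemeasurable hB'meas).aestronglyMeasurable
  have hg_Icc : IntegrableOn g (Set.Icc (0:ℝ) T) volume := by
    refine ⟨hg_meas, HasFiniteIntegral.restrict_of_bounded (C := φ (max M 0))
      measure_Icc_lt_top ?_⟩
    refine (ae_restrict_iff' measurableSet_Icc).mpr (ae_of_all _ fun s hs => ?_)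
    have h1 : (0:ℝ) ≤ ψ (Bstar' s) := hφ0 _ (le_max_right _ _)
    have h2 : ψ (Bstar' s) ≤ φ (max M 0) := hφ_mono (le_max_right _ _)
      (max_le_max (le_of_abs_le (hM s hs)) le_rfl)
    rw [Real.norm_eq_abs, abs_of_nonneg h1]; exact h2
  have hg_int : ∀ a b : ℝ, a ∈ Set.Icc (0:ℝ) T → b ∈ Set.Icc (0:ℝ) T →
      IntervalIntegrable g volume a b := by
    intro a b ha hb
    rw [intervalIntegrable_iff]
    exact hg_Icc.mono_set (Set.uIoc_subset_uIcc.trans (Set.uIcc_subset_Icc ha hb))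
  have hNnull : volume ((↑S ∪ {0, T₁, T} : Set ℝ)) = 0 := by
    refine measure_union_null hSnull ?_
    exact ((Set.finite_singleton T).insert T₁ |>.insert 0).measure_zero _
  have hNae : ∀ᵐ x ∂(volume : Measure ℝ), x ∉ ((↑S ∪ {0, T₁, T}) : Set ℝ) :=
    measure_eq_zero_iff_ae_notMem.mp hNnull
  -- a.e. on [0,T], φ ∘ Bstar' agrees with g
  have hgφ : ∀ᵐ x ∂(volume.restrict (Set.Icc (0:ℝ) T)), φ (Bstar' x) = g x := by
    filter_upwards [ae_restrict_mem measurableSet_Icc, ae_restrict_of_ae hNae] with x hx hxN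
    simp only [Set.mem_union, Set.mem_insert_iff, Set.mem_singleton_iff, not_or] at hxN
    obtain ⟨hxS, hx0, hxT₁, hxT⟩ := hxN
    have hxIoo : x ∈ Set.Ioo (0:ℝ) T :=
      ⟨lt_of_le_of_ne hx.1 (Ne.symm hx0), lt_of_le_of_ne hx.2 hxT⟩
    simp only [hgdef, hψdef, max_eq_left (hd_nonneg x hxIoo hxS)]
  have hφB_int : ∀ a b : ℝ, a ∈ Set.Icc (0:ℝ) T → b ∈ Set.Icc (0:ℝ) T →
      IntervalIntegrable (fun s => φ (Bstar' s)) volume a b := by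
    intro a b ha hb
    refine (hg_int a b ha hb).congr_ae ?_
    refine ae_restrict_of_ae_restrict_of_subset
      (Set.uIoc_subset_uIcc.trans (Set.uIcc_subset_Icc ha hb)) ?_
    filter_upwards [hgφ] with x hx using hx.symm
  -- the energy bound
  intro t ht
  by_cases htT₁ : t ≤ T₁
  · rw [intervalIntegral.integral_congr (g := fun s => φ (Bstar' s)) ?_]
    · exact hBstar_energy t ht
    · intro s hs
      rw [Set.uIcc_of_le ht.1] at hs
      simp only [hBhat'_def s, if_pos (hs.2.trans htT₁)]
  · push_neg at htT₁
    have e1 : (∫ s in (0:ℝ)..T₁, φ (Bhat' s)) = ∫ s in (0:ℝ)..T₁, φ (Bstar' s) := by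
      refine intervalIntegral.integral_congr fun s hs => ?_
      rw [Set.uIcc_of_le hT₁0] at hs
      simp only [hBhat'_def s, if_pos hs.2]
    have iA : IntervalIntegrable (fun s => φ (Bstar' s)) volume 0 T₁ :=
      hφB_int 0 T₁ ⟨le_refl 0, hT.le⟩ hT₁
    have iB : IntervalIntegrable (fun s => φ (Bstar' s)) volume T₁ t := hφB_int T₁ t hT₁ ht
    have iD : IntervalIntegrable (fun s => φ (Bhat' s)) volume 0 T₁ := by
      refine iA.congr_ae ?_
      rw [Set.uIoc_of_le hT₁0]
      refine (ae_restrict_iff' measurableSet_Ioc).mpr (ae_of_all _ fun s hs => ?_)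
      simp only [hBhat'_def s, if_pos hs.2]
    have iC : IntervalIntegrable (fun s => φ (Bhat' s)) volume T₁ t := by
      refine (_root_.intervalIntegrable_const (c := φ m)).congr_ae ?_
      rw [Set.uIoc_of_le htT₁.le]
      refine (ae_restrict_iff' measurableSet_Ioc).mpr (ae_of_all _ fun s hs => ?_)
      simp only [hBhat'_def s, if_neg (not_le.mpr hs.1)]
    have hsplit : (∫ s in (0:ℝ)..t, φ (Bhat' s))
        = (∫ s in (0:ℝ)..T₁, φ (Bhat' s)) + ∫ s in T₁..t, φ (Bhat' s) :=
      (integral_add_adjacent_intervals iD iC).symm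
    have e2 : (∫ s in T₁..t, φ (Bhat' s)) = (t - T₁) * φ m := by
      have h : (∫ s in T₁..t, φ (Bhat' s)) = ∫ s in T₁..t, (fun _ => φ m) s := by
        refine intervalIntegral.integral_congr_ae (ae_of_all _ fun s hs => ?_)
        rw [Set.uIoc_of_le htT₁.le] at hs
        simp only [hBhat'_def s, if_neg (not_le.mpr hs.1)]
      rw [h, intervalIntegral.integral_const, smul_eq_mul]
    have e3 : (t - T₁) * φ m ≤ ∫ s in T₁..t, φ (Bstar' s) := by
      have hmono_int : (∫ s in T₁..t, (fun _ => φ m) s) ≤ ∫ s in T₁..t, φ (Bstar' s) := by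
        refine intervalIntegral.integral_mono_ae_restrict htT₁.le _root_.intervalIntegrable_const iB ?_
        filter_upwards [ae_restrict_mem measurableSet_Icc, ae_restrict_of_ae hNae] with x hx hxN
        simp only [Set.mem_union, Set.mem_insert_iff, Set.mem_singleton_iff, not_or] at hxN
        obtain ⟨hxS, hx0, hxT₁, hxT⟩ := hxN
        have hxIoo : x ∈ Set.Ioo T₁ T :=
          ⟨lt_of_le_of_ne hx.1 (Ne.symm hxT₁), lt_of_le_of_ne (hx.2.trans ht.2) hxT⟩
        exact hφ_mono hm0 (hd_ge_m x hxIoo hxS)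
      simpa [intervalIntegral.integral_const, smul_eq_mul] using hmono_int
    have e4 : (∫ s in (0:ℝ)..T₁, φ (Bstar' s)) + ∫ s in T₁..t, φ (Bstar' s)
        = ∫ s in (0:ℝ)..t, φ (Bstar' s) := integral_add_adjacent_intervals iA iB
    calc (∫ s in (0:ℝ)..t, φ (Bhat' s))
        = (∫ s in (0:ℝ)..T₁, φ (Bstar' s)) + (t - T₁) * φ m := by rw [hsplit, e1, e2]
      _ ≤ (∫ s in (0:ℝ)..T₁, φ (Bstar' s)) + ∫ s in T₁..t, φ (Bstar' s) := by linarith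
      _ = ∫ s in (0:ℝ)..t, φ (Bstar' s) := e4
      _ ≤ Es t := hBstar_energy t ht
end
end

section
/- Let r be a rate function and φ = r⁻¹ its (convex, strictly increasing, continuous) inverse. Let T > 0 and let B̂, B : [0,T] → [0,∞) be nondecreasing, piecewise continuously differentiable functions with B̂ convex, B̂(0) = B(0) and B̂(T) = B(T). Suppose that B̂ is affine on every open interval on which B(t) > B̂(t). Then ∫₀ᵀ φ(B̂'(t)) dt ≤ ∫₀ᵀ φ(B'(t)) dt; that is, among all transmitted data curves delivering the same total amount of data by time T, B̂ consumes no more energy than B. -/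
open MeasureTheory Set Filter intervalIntegral

noncomputable section

/-- Lower slope (right-derivative lower bound) of `φ` at `u`. -/
def lowSlope (φ : ℝ → ℝ) (u : ℝ) : ℝ :=
  sInf ((fun w => (φ w - φ u) / (w - u)) '' Set.Ioi u)

lemma slope_nonneg_of_monotoneOn {φ : ℝ → ℝ} (hm : MonotoneOn φ (Set.Ici 0))
    {u w : ℝ} (hu : 0 ≤ u) (huw : u < w) : 0 ≤ (φ w - φ u) / (w - u) :=
  div_nonneg (sub_nonneg.2 (hm hu (hu.trans huw.le) huw.le)) (sub_nonneg.2 huw.le)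

lemma lowSlope_bddBelow {φ : ℝ → ℝ} (hm : MonotoneOn φ (Set.Ici 0)) {u : ℝ} (hu : 0 ≤ u) :
    BddBelow ((fun w => (φ w - φ u) / (w - u)) '' Set.Ioi u) := by
  refine ⟨0, ?_⟩
  rintro x ⟨w, hw, rfl⟩
  exact slope_nonneg_of_monotoneOn hm hu hw

lemma lowSlope_nonempty {φ : ℝ → ℝ} (u : ℝ) :
    ((fun w => (φ w - φ u) / (w - u)) '' Set.Ioi u).Nonempty :=
  ⟨_, ⟨u + 1, by simp, rfl⟩⟩

lemma lowSlope_le_slope {φ : ℝ → ℝ} (hm : MonotoneOn φ (Set.Ici 0)) {u w : ℝ}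
    (hu : 0 ≤ u) (huw : u < w) : lowSlope φ u ≤ (φ w - φ u) / (w - u) :=
  csInf_le (lowSlope_bddBelow hm hu) ⟨w, huw, rfl⟩

lemma slope_le_lowSlope {φ : ℝ → ℝ} (hc : ConvexOn ℝ (Set.Ici 0) φ) {v u : ℝ}
    (hv : 0 ≤ v) (hvu : v < u) : (φ u - φ v) / (u - v) ≤ lowSlope φ u := by
  apply le_csInf (lowSlope_nonempty u)
  rintro x ⟨w, hw, rfl⟩
  exact hc.slope_mono_adjacent hv (hv.trans (hvu.trans hw).le) hvu hw

lemma lowSlope_mono {φ : ℝ → ℝ} (hc : ConvexOn ℝ (Set.Ici 0) φ)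
    (hm : MonotoneOn φ (Set.Ici 0)) {u v : ℝ} (hu : 0 ≤ u) (huv : u ≤ v) :
    lowSlope φ u ≤ lowSlope φ v := by
  rcases eq_or_lt_of_le huv with rfl | huv
  · exact le_rfl
  · exact (lowSlope_le_slope hm hu huv).trans (slope_le_lowSlope hc hu huv)

/-- Total-function subgradient of `φ`. -/
def ksub (φ : ℝ → ℝ) (u : ℝ) : ℝ := lowSlope φ (max u 0)

lemma ksub_mono {φ : ℝ → ℝ} (hc : ConvexOn ℝ (Set.Ici 0) φ)
    (hm : MonotoneOn φ (Set.Ici 0)) : Monotone (ksub φ) := fun u v huv =>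
  lowSlope_mono hc hm (le_max_right u 0) (max_le_max huv le_rfl)

lemma ksub_support {φ : ℝ → ℝ} (hc : ConvexOn ℝ (Set.Ici 0) φ)
    (hm : MonotoneOn φ (Set.Ici 0)) {u v : ℝ} (hu : 0 ≤ u) (hv : 0 ≤ v) :
    φ u + ksub φ u * (v - u) ≤ φ v := by
  have hmax : max u 0 = u := max_eq_left hu
  rw [ksub, hmax]
  rcases lt_trichotomy v u with hlt | rfl | hgt
  · have h1 : (φ u - φ v) / (u - v) ≤ lowSlope φ u := slope_le_lowSlope hc hv hlt
    have hne : u - v > 0 := sub_pos.2 hlt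
    have h2 : lowSlope φ u * (v - u) ≤ ((φ u - φ v) / (u - v)) * (v - u) := by
      apply mul_le_mul_of_nonpos_right h1 (by linarith)
    have h3 : ((φ u - φ v) / (u - v)) * (v - u) = φ v - φ u := by
      field_simp
      ring
    linarith
  · simp
  · have h1' : lowSlope φ u ≤ (φ v - φ u) / (v - u) := lowSlope_le_slope hm hu hgt
    have hne : v - u > 0 := sub_pos.2 hgt
    have h2 : lowSlope φ u * (v - u) ≤ ((φ v - φ u) / (v - u)) * (v - u) :=
      mul_le_mul_of_nonneg_right h1' hne.le
    have h3 : ((φ v - φ u) / (v - u)) * (v - u) = φ v - φ u := by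
      field_simp
    linarith

noncomputable section

lemma deriv_nonneg_of_monotoneOn {f : ℝ → ℝ} {a b t d : ℝ}
    (hf : MonotoneOn f (Set.Icc a b)) (ht : t ∈ Set.Ioo a b) (hd : HasDerivAt f d t) :
    0 ≤ d := by
  have h := hasDerivAt_iff_tendsto_slope.mp hd
  have h' : Tendsto (slope f t) (nhdsWithin t (Set.Ioi t)) (nhds d) :=
    h.mono_left (nhdsWithin_mono t fun x hx => ne_of_gt hx)
  refine ge_of_tendsto h' ?_
  filter_upwards [Ioo_mem_nhdsGT_of_mem (Set.left_mem_Ico.2 ht.2)] with w hw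
  rw [slope_def_field]
  rw [div_eq_mul_inv] -- keep as is
  apply mul_nonneg
  · exact sub_nonneg.2 (hf ⟨ht.1.le, ht.2.le⟩ ⟨(ht.1.trans hw.1).le, hw.2.le⟩ hw.1.le)
  · exact inv_nonneg.2 (sub_nonneg.2 hw.1.le)

lemma hasDerivAt_le_slope {f : ℝ → ℝ} {a b x y d : ℝ}
    (hf : ConvexOn ℝ (Set.Icc a b) f) (hx : x ∈ Set.Ioo a b) (hy : y ∈ Set.Icc a b)
    (hxy : x < y) (hd : HasDerivAt f d x) : d ≤ (f y - f x) / (y - x) := by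
  have h := hasDerivAt_iff_tendsto_slope.mp hd
  have h' : Tendsto (slope f x) (nhdsWithin x (Set.Ioi x)) (nhds d) :=
    h.mono_left (nhdsWithin_mono x fun z hz => ne_of_gt hz)
  refine le_of_tendsto h' ?_
  filter_upwards [Ioo_mem_nhdsGT_of_mem (Set.left_mem_Ico.2 hxy)] with w hw
  rw [slope_def_field]
  have hxs : x ∈ Set.Icc a b := Set.Ioo_subset_Icc_self hx
  have hws : w ∈ Set.Icc a b := ⟨hx.1.le.trans hw.1.le, hw.2.le.trans hy.2⟩
  exact hf.secant_mono hxs hws hy (ne_of_gt hw.1) (ne_of_gt (hxy.trans_le le_rfl)) hw.2.le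

lemma slope_le_hasDerivAt {f : ℝ → ℝ} {a b x y d : ℝ}
    (hf : ConvexOn ℝ (Set.Icc a b) f) (hx : x ∈ Set.Icc a b) (hy : y ∈ Set.Ioo a b)
    (hxy : x < y) (hd : HasDerivAt f d y) : (f y - f x) / (y - x) ≤ d := by
  have h := hasDerivAt_iff_tendsto_slope.mp hd
  have h' : Tendsto (slope f y) (nhdsWithin y (Set.Iio y)) (nhds d) :=
    h.mono_left (nhdsWithin_mono y fun z hz => ne_of_lt hz)
  have key : (f y - f x) / (y - x) = slope f y x := by
    rw [slope_def_field]
    rw [div_eq_div_iff (by linarith) (by linarith)]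
    ring
  rw [key]
  refine ge_of_tendsto h' ?_
  filter_upwards [Ioo_mem_nhdsLT_of_mem (Set.right_mem_Ioc.2 hxy)] with w hw
  have hys : y ∈ Set.Icc a b := Set.Ioo_subset_Icc_self hy
  have hws : w ∈ Set.Icc a b := ⟨hx.1.trans hw.1.le, hw.2.le.trans hy.2.le⟩
  rw [slope_def_field, slope_def_field]
  exact hf.secant_mono hys hx hws (ne_of_lt hxy) (ne_of_lt hw.2) hw.1.le

/-- Derivative of a convex function is monotone (where it exists). -/
lemma convex_deriv_mono {f : ℝ → ℝ} {a b t₁ t₂ d₁ d₂ : ℝ}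
    (hf : ConvexOn ℝ (Set.Icc a b) f) (ht₁ : t₁ ∈ Set.Ioo a b) (ht₂ : t₂ ∈ Set.Ioo a b)
    (h12 : t₁ < t₂) (hd₁ : HasDerivAt f d₁ t₁) (hd₂ : HasDerivAt f d₂ t₂) : d₁ ≤ d₂ :=
  (hasDerivAt_le_slope hf ht₁ (Set.Ioo_subset_Icc_self ht₂) h12 hd₁).trans
    (slope_le_hasDerivAt hf (Set.Ioo_subset_Icc_self ht₁) ht₂ h12 hd₂)

lemma affine_hasDerivAt_eq {f : ℝ → ℝ} {a b m c t d : ℝ}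
    (hmc : ∀ u ∈ Set.Ioo a b, f u = m * u + c) (ht : t ∈ Set.Ioo a b)
    (hd : HasDerivAt f d t) : d = m := by
  have h2 : HasDerivAt (fun u => m * u + c) m t := by
    simpa using ((hasDerivAt_id t).const_mul m).add_const c
  have heq : f =ᶠ[nhds t] fun u => m * u + c := by
    filter_upwards [Ioo_mem_nhds ht.1 ht.2] with u hu using hmc u hu
  exact hd.unique (h2.congr_of_eventuallyEq heq)

/-- FTC with finitely many exceptional points. -/
lemma ftc_finset (s : Finset ℝ) (f f' : ℝ → ℝ) :
    ∀ a b : ℝ, a ≤ b → ContinuousOn f (Set.Icc a b) →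
    (∀ x ∈ Set.Ioo a b, x ∉ s → HasDerivAt f (f' x) x) →
    IntervalIntegrable f' volume a b →
    ∫ x in a..b, f' x = f b - f a := by
  induction s using Finset.induction_on with
  | empty =>
    intro a b hab hcont hderiv hint
    exact integral_eq_sub_of_hasDerivAt_of_le hab hcont
      (fun x hx => hderiv x hx (by simp)) hint
  | insert _ _ hc ih =>
    rename_i c s
    intro a b hab hcont hderiv hint
    by_cases hc' : c ∈ Set.Ioo a b
    · have hsub1 : Set.uIcc a c ⊆ Set.uIcc a b := by
        rw [Set.uIcc_of_le hc'.1.le, Set.uIcc_of_le hab]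
        exact Set.Icc_subset_Icc le_rfl hc'.2.le
      have hsub2 : Set.uIcc c b ⊆ Set.uIcc a b := by
        rw [Set.uIcc_of_le hc'.2.le, Set.uIcc_of_le hab]
        exact Set.Icc_subset_Icc hc'.1.le le_rfl
      have hint1 : IntervalIntegrable f' volume a c := hint.mono_set hsub1
      have hint2 : IntervalIntegrable f' volume c b := hint.mono_set hsub2
      have h1 : ∫ x in a..c, f' x = f c - f a := by
        refine ih a c hc'.1.le (hcont.mono (Set.Icc_subset_Icc le_rfl hc'.2.le))
          (fun x hx hxs => hderiv x ⟨hx.1, hx.2.trans hc'.2⟩ ?_) hint1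
        simp only [Finset.mem_insert, not_or]
        exact ⟨ne_of_lt hx.2, hxs⟩
      have h2 : ∫ x in c..b, f' x = f b - f c := by
        refine ih c b hc'.2.le (hcont.mono (Set.Icc_subset_Icc hc'.1.le le_rfl))
          (fun x hx hxs => hderiv x ⟨hc'.1.trans hx.1, hx.2⟩ ?_) hint2
        simp only [Finset.mem_insert, not_or]
        exact ⟨ne_of_gt hx.1, hxs⟩
      rw [← intervalIntegral.integral_add_adjacent_intervals hint1 hint2, h1, h2]
      ring
    · refine ih a b hab hcont (fun x hx hxs => hderiv x hx ?_) hint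
      simp only [Finset.mem_insert, not_or]
      exact ⟨fun h => hc' (h ▸ hx), hxs⟩

lemma restrict_Ioc_eq_diff (T : ℝ) (s : Finset ℝ) :
    volume.restrict (Set.Ioc 0 T) = volume.restrict (Set.Ioo 0 T \ (s : Set ℝ)) := by
  refine Measure.restrict_congr_set ?_
  rw [MeasureTheory.ae_eq_set]
  constructor
  · refine measure_mono_null (fun t ht => ?_) (((Set.countable_singleton T).union
      s.countable_toSet).measure_zero volume)
    rcases ht with ⟨ht1, ht2⟩
    simp only [Set.mem_diff, Set.mem_Ioo, not_and, not_not] at ht2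
    by_cases hT : t < T
    · exact Or.inr (ht2 ⟨ht1.1, hT⟩)
    · exact Or.inl (le_antisymm ht1.2 (not_lt.1 hT))
  · have he : (Set.Ioo 0 T \ (s : Set ℝ)) \ Set.Ioc 0 T = ∅ :=
      Set.eq_empty_iff_forall_notMem.2 fun t ht => ht.2 (Set.Ioo_subset_Ioc_self ht.1.1)
    rw [he]; simp

lemma integrableOn_Icc_of_bounded {f' : ℝ → ℝ} {T M : ℝ} {s : Finset ℝ}
    (hc : ContinuousOn f' (Set.Icc 0 T \ (s : Set ℝ)))
    (hM : ∀ t ∈ Set.Icc (0:ℝ) T, |f' t| ≤ M) :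
    IntegrableOn f' (Set.Icc 0 T) volume := by
  have hmeas : MeasurableSet (Set.Icc (0:ℝ) T \ (s : Set ℝ)) :=
    measurableSet_Icc.diff s.finite_toSet.measurableSet
  have haem : AEMeasurable f' (volume.restrict (Set.Icc 0 T \ (s : Set ℝ))) :=
    hc.aemeasurable hmeas
  have hre : volume.restrict (Set.Icc (0:ℝ) T \ (s : Set ℝ)) = volume.restrict (Set.Icc 0 T) :=
    Measure.restrict_congr_set (MeasureTheory.diff_ae_eq_self.2
      (measure_mono_null Set.inter_subset_right (s.countable_toSet.measure_zero volume)))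
  rw [hre] at haem
  refine ⟨haem.aestronglyMeasurable, HasFiniteIntegral.restrict_of_bounded
    (C := M) measure_Icc_lt_top ?_⟩
  exact (ae_restrict_iff' measurableSet_Icc).2 (Filter.Eventually.of_forall fun t ht => by
    rw [Real.norm_eq_abs]; exact hM t ht)

lemma aem_Ioc_of_contOn {f' : ℝ → ℝ} {T : ℝ} {s : Finset ℝ}
    (hc : ContinuousOn f' (Set.Icc 0 T \ (s : Set ℝ))) :
    AEMeasurable f' (volume.restrict (Set.Ioc 0 T)) := by
  have hmeas : MeasurableSet (Set.Icc (0:ℝ) T \ (s : Set ℝ)) :=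
    measurableSet_Icc.diff s.finite_toSet.measurableSet
  have haem : AEMeasurable f' (volume.restrict (Set.Icc 0 T \ (s : Set ℝ))) :=
    hc.aemeasurable hmeas
  have hle : volume.restrict (Set.Ioo 0 T \ (s : Set ℝ)) ≤
      volume.restrict (Set.Icc (0:ℝ) T \ (s : Set ℝ)) :=
    Measure.restrict_mono (Set.diff_subset_diff_left Set.Ioo_subset_Icc_self) le_rfl
  rw [restrict_Ioc_eq_diff T s]
  exact haem.mono_measure hle

lemma ftc_Ioc {T : ℝ} {f f' : ℝ → ℝ} {s : Finset ℝ}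
    (hcont : ContinuousOn f (Set.Icc 0 T))
    (hd : ∀ t ∈ Set.Ioo 0 T, t ∉ s → HasDerivAt f (f' t) t)
    (hint : IntegrableOn f' (Set.Icc 0 T) volume)
    {x : ℝ} (hx0 : 0 ≤ x) (hxT : x ≤ T) :
    ∫ t in Set.Ioc x T, f' t = f T - f x := by
  have hii : IntervalIntegrable f' volume x T :=
    (intervalIntegrable_iff_integrableOn_Ioc_of_le hxT).2
      (hint.mono_set ((Set.Ioc_subset_Ioc_left hx0).trans Set.Ioc_subset_Icc_self))
  rw [← intervalIntegral.integral_of_le hxT]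
  exact ftc_finset s f f' x T hxT (hcont.mono (Set.Icc_subset_Icc hx0 le_rfl))
    (fun u hu hus => hd u ⟨hx0.trans_lt hu.1, hu.2⟩ hus) hii

lemma integrableOn_phi_comp {φ f f' : ℝ → ℝ} {T M : ℝ} {s : Finset ℝ}
    (hφ_cont : ContinuousOn φ (Set.Ici 0)) (hφm : MonotoneOn φ (Set.Ici 0))
    (hd : ∀ t ∈ Set.Ioo 0 T, t ∉ s → HasDerivAt f (f' t) t)
    (hc : ContinuousOn f' (Set.Icc 0 T \ (s : Set ℝ)))
    (hM : ∀ t ∈ Set.Icc (0:ℝ) T, |f' t| ≤ M)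
    (hmono : MonotoneOn f (Set.Icc 0 T)) :
    IntegrableOn (fun t => φ (f' t)) (Set.Ioc 0 T) volume := by
  have hpos : ∀ t ∈ Set.Ioo 0 T \ (s : Set ℝ), 0 ≤ f' t := fun t ht =>
    deriv_nonneg_of_monotoneOn hmono ht.1 (hd t ht.1 ht.2)
  have hmeasD : MeasurableSet (Set.Ioo (0:ℝ) T \ (s : Set ℝ)) :=
    measurableSet_Ioo.diff s.finite_toSet.measurableSet
  have hcomp : ContinuousOn (fun t => φ (f' t)) (Set.Ioo 0 T \ (s : Set ℝ)) :=
    hφ_cont.comp (hc.mono (Set.diff_subset_diff_left Set.Ioo_subset_Icc_self)) hpos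
  have haem : AEMeasurable (fun t => φ (f' t)) (volume.restrict (Set.Ioc 0 T)) := by
    rw [restrict_Ioc_eq_diff T s]
    exact hcomp.aemeasurable hmeasD
  have hmemD : ∀ᵐ t ∂(volume.restrict (Set.Ioc 0 T)), t ∈ Set.Ioo 0 T \ (s : Set ℝ) := by
    rw [restrict_Ioc_eq_diff T s]
    exact ae_restrict_mem hmeasD
  refine ⟨haem.aestronglyMeasurable, HasFiniteIntegral.restrict_of_bounded
    (C := max |φ 0| |φ M|) measure_Ioc_lt_top ?_⟩
  filter_upwards [hmemD] with t ht
  have h0 : 0 ≤ f' t := hpos t ht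
  have htIcc : t ∈ Set.Icc (0:ℝ) T := Set.Ioo_subset_Icc_self ht.1
  have hfM : f' t ≤ M := (abs_le.1 (hM t htIcc)).2
  have hMpos : (0:ℝ) ≤ M := h0.trans hfM
  rw [Real.norm_eq_abs, abs_le]
  constructor
  · have : φ 0 ≤ φ (f' t) := hφm (Set.mem_Ici.2 le_rfl) h0 h0
    have h2 : -|φ 0| ≤ φ 0 := neg_abs_le _
    have h3 : |φ 0| ≤ max |φ 0| |φ M| := le_max_left _ _
    linarith
  · have : φ (f' t) ≤ φ M := hφm h0 hMpos hfM
    have h2 : φ M ≤ |φ M| := le_abs_self _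
    have h3 : |φ M| ≤ max |φ 0| |φ M| := le_max_right _ _
    linarith

/-- Step 3 in the proof of Theorem 3.2: a convex curve `B̂` that is affine on
every open interval where another curve `B` exceeds it, and shares its endpoints,
uses no more energy than `B`. -/
theorem truncated_tangent_energy_minimal
    (r φ : ℝ → ℝ) (hr : IsRateFunction r) (hφ : IsInverseOn φ r)
    (hφ_convex : ConvexOn ℝ (Set.Ici 0) φ)
    (hφ_mono : StrictMonoOn φ (Set.Ici 0))
    (hφ_cont : ContinuousOn φ (Set.Ici 0))
    (T : ℝ) (hT : 0 < T)
    (Bhat Bhat' B B' : ℝ → ℝ)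
    (hBhat_pc1 : PiecewiseC1On 0 T Bhat Bhat')
    (hB_pc1 : PiecewiseC1On 0 T B B')
    (hBhat_mono : MonotoneOn Bhat (Set.Icc 0 T))
    (hB_mono : MonotoneOn B (Set.Icc 0 T))
    (hBhat_nonneg : ∀ t ∈ Set.Icc (0:ℝ) T, 0 ≤ Bhat t)
    (hB_nonneg : ∀ t ∈ Set.Icc (0:ℝ) T, 0 ≤ B t)
    (hBhat_convex : ConvexOn ℝ (Set.Icc 0 T) Bhat)
    (h_start : Bhat 0 = B 0) (h_end : Bhat T = B T)
    -- `B̂` is affine on every open interval on which `B > B̂`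
    (h_affine : ∀ a b : ℝ, 0 ≤ a → a < b → b ≤ T →
      (∀ t ∈ Set.Ioo a b, Bhat t < B t) →
      ∃ mc : ℝ × ℝ, ∀ t ∈ Set.Ioo a b, Bhat t = mc.1 * t + mc.2) :
    (∫ t in (0:ℝ)..T, φ (Bhat' t)) ≤ ∫ t in (0:ℝ)..T, φ (B' t) := by
  classical
  have hφm : MonotoneOn φ (Set.Ici 0) := hφ_mono.monotoneOn
  obtain ⟨hBhat_cont, ⟨s1, hs1d, hs1c⟩, ⟨M1, hM1⟩⟩ := hBhat_pc1
  obtain ⟨hB_cont, ⟨s2, hs2d, hs2c⟩, ⟨M2, hM2⟩⟩ := hB_pc1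
  set s : Finset ℝ := s1 ∪ s2 with hs_def
  set D : Set ℝ := Set.Ioo 0 T \ (s : Set ℝ) with hD_def
  -- basic derivative facts
  have hd1 : ∀ t ∈ D, HasDerivAt Bhat (Bhat' t) t := fun t ht =>
    hs1d t ht.1 (fun hmem => ht.2 (by simp [hs_def, hmem]))
  have hd2 : ∀ t ∈ D, HasDerivAt B (B' t) t := fun t ht =>
    hs2d t ht.1 (fun hmem => ht.2 (by simp [hs_def, hmem]))
  have hpos1 : ∀ t ∈ D, 0 ≤ Bhat' t := fun t ht =>
    deriv_nonneg_of_monotoneOn hBhat_mono ht.1 (hd1 t ht)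
  have hpos2 : ∀ t ∈ D, 0 ≤ B' t := fun t ht =>
    deriv_nonneg_of_monotoneOn hB_mono ht.1 (hd2 t ht)
  set k : ℝ → ℝ := fun t => ksub φ (Bhat' t) with hk_def
  have hksub_mono : Monotone (ksub φ) := ksub_mono hφ_convex hφm
  have hkD_mono : ∀ t₁ ∈ D, ∀ t₂ ∈ D, t₁ ≤ t₂ → k t₁ ≤ k t₂ := by
    intro t₁ h₁ t₂ h₂ h12
    rcases eq_or_lt_of_le h12 with rfl | hlt
    · exact le_rfl
    · exact hksub_mono (convex_deriv_mono hBhat_convex h₁.1 h₂.1 hlt (hd1 _ h₁) (hd1 _ h₂))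
  have hM1nonneg : 0 ≤ M1 := (abs_nonneg _).trans (hM1 0 ⟨le_rfl, hT.le⟩)
  set c0 : ℝ := ksub φ 0 with hc0_def
  set C : ℝ := ksub φ M1 with hC_def
  have hc0C : c0 ≤ C := hksub_mono hM1nonneg
  have hkub : ∀ t ∈ Set.Icc (0:ℝ) T, k t ≤ C := fun t ht =>
    hksub_mono ((le_abs_self _).trans (hM1 t ht))
  have hklb : ∀ t, c0 ≤ k t := fun t => by
    show lowSlope φ (max 0 0) ≤ lowSlope φ (max (Bhat' t) 0)
    exact lowSlope_mono hφ_convex hφm (by simp) (by simp)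
  -- integrability of the derivatives
  have hint1 : IntegrableOn Bhat' (Set.Icc 0 T) volume := integrableOn_Icc_of_bounded hs1c hM1
  have hint2 : IntegrableOn B' (Set.Icc 0 T) volume := integrableOn_Icc_of_bounded hs2c hM2
  have haem1 : AEMeasurable Bhat' (volume.restrict (Set.Ioc (0:ℝ) T)) := aem_Ioc_of_contOn hs1c
  have haem2 : AEMeasurable B' (volume.restrict (Set.Ioc (0:ℝ) T)) := aem_Ioc_of_contOn hs2c
  have hkaem : AEMeasurable k (volume.restrict (Set.Ioc (0:ℝ) T)) :=
    hksub_mono.measurable.comp_aemeasurable haem1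
  set g' : ℝ → ℝ := fun t => B' t - Bhat' t with hg'_def
  have hg'aem : AEMeasurable g' (volume.restrict (Set.Ioc (0:ℝ) T)) := haem2.sub haem1
  have hMg : ∀ t ∈ Set.Icc (0:ℝ) T, |g' t| ≤ M2 + M1 := fun t ht =>
    (abs_sub _ _).trans (add_le_add (hM2 t ht) (hM1 t ht))
  have hmeasD : MeasurableSet D := measurableSet_Ioo.diff s.finite_toSet.measurableSet
  have hDae : ∀ᵐ t ∂(volume.restrict (Set.Ioc (0:ℝ) T)), t ∈ D := by
    rw [restrict_Ioc_eq_diff T s]; exact ae_restrict_mem hmeasD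
  have hIccae : ∀ᵐ t ∂(volume.restrict (Set.Ioc (0:ℝ) T)), t ∈ Set.Icc (0:ℝ) T := by
    filter_upwards [hDae] with t ht; exact Set.Ioo_subset_Icc_self ht.1
  -- FTC facts
  have hftcg : ∀ x, 0 ≤ x → x ≤ T →
      ∫ t in Set.Ioc x T, g' t = (B T - B x) - (Bhat T - Bhat x) := by
    intro x hx0 hxT
    have i1 : IntegrableOn B' (Set.Ioc x T) volume :=
      hint2.mono_set ((Set.Ioc_subset_Ioc_left hx0).trans Set.Ioc_subset_Icc_self)
    have i2 : IntegrableOn Bhat' (Set.Ioc x T) volume :=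
      hint1.mono_set ((Set.Ioc_subset_Ioc_left hx0).trans Set.Ioc_subset_Icc_self)
    rw [hg'_def]
    rw [integral_sub i1 i2, ftc_Ioc hB_cont hs2d hint2 hx0 hxT,
      ftc_Ioc hBhat_cont hs1d hint1 hx0 hxT]
  -- integrability of composites
  have I1 : IntegrableOn (fun t => φ (B' t)) (Set.Ioc 0 T) volume :=
    integrableOn_phi_comp hφ_cont hφm hs2d hs2c hM2 hB_mono
  have I2 : IntegrableOn (fun t => φ (Bhat' t)) (Set.Ioc 0 T) volume :=
    integrableOn_phi_comp hφ_cont hφm hs1d hs1c hM1 hBhat_mono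
  have I4 : IntegrableOn g' (Set.Ioc 0 T) volume :=
    (hint2.mono_set Set.Ioc_subset_Icc_self).sub (hint1.mono_set Set.Ioc_subset_Icc_self)
  have hkbound : ∀ᵐ t ∂(volume.restrict (Set.Ioc (0:ℝ) T)), |k t| ≤ max |c0| |C| := by
    filter_upwards [hIccae] with t ht
    rw [abs_le]
    constructor
    · have := hklb t
      have h2 : -max |c0| |C| ≤ -|c0| := neg_le_neg (le_max_left _ _)
      have h3 : -|c0| ≤ c0 := neg_abs_le _
      linarith
    · exact ((hkub t ht).trans (le_abs_self _)).trans (le_max_right _ _)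
  have I3 : IntegrableOn (fun t => k t * g' t) (Set.Ioc 0 T) volume := by
    refine ⟨(hkaem.mul hg'aem).aestronglyMeasurable, HasFiniteIntegral.restrict_of_bounded
      (C := max |c0| |C| * (M2 + M1)) measure_Ioc_lt_top ?_⟩
    filter_upwards [hkbound, hIccae] with t h1 h2
    rw [Real.norm_eq_abs, abs_mul]
    exact mul_le_mul h1 (hMg t h2) (abs_nonneg _) ((abs_nonneg c0).trans (le_max_left _ _))
  -- Step 1 : convexity supporting-line inequality
  have key1 : (∫ t in Set.Ioc (0:ℝ) T, φ (Bhat' t)) + ∫ t in Set.Ioc (0:ℝ) T, k t * g' t ≤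
      ∫ t in Set.Ioc (0:ℝ) T, φ (B' t) := by
    have hptwise : ∀ᵐ t ∂(volume.restrict (Set.Ioc (0:ℝ) T)),
        0 ≤ φ (B' t) - φ (Bhat' t) - k t * g' t := by
      filter_upwards [hDae] with t ht
      have h1 := ksub_support hφ_convex hφm (hpos1 t ht) (hpos2 t ht)
      simp only [hk_def, hg'_def]
      linarith
    have hnn : 0 ≤ ∫ t in Set.Ioc (0:ℝ) T, (φ (B' t) - φ (Bhat' t) - k t * g' t) :=
      integral_nonneg_of_ae hptwise
    have I12 : Integrable (fun t => φ (B' t) - φ (Bhat' t))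
        (volume.restrict (Set.Ioc (0:ℝ) T)) := I1.sub I2
    rw [integral_sub I12 I3, integral_sub I1 I2] at hnn
    linarith
  -- Step 2 : ∫ k g' ≥ 0 via layer-cake + Fubini
  have key2 : 0 ≤ ∫ t in Set.Ioc (0:ℝ) T, k t * g' t := by
    obtain ⟨km, hkm_meas, hkm_ae⟩ := hkaem
    obtain ⟨gm, hgm_meas, hgm_ae⟩ := hg'aem
    haveI hfin1 : IsFiniteMeasure (volume.restrict (Set.Ioc (0:ℝ) T)) :=
      ⟨by rw [Measure.restrict_apply_univ]; exact measure_Ioc_lt_top⟩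
    haveI hfin2 : IsFiniteMeasure (volume.restrict (Set.Ioc c0 C)) :=
      ⟨by rw [Measure.restrict_apply_univ]; exact measure_Ioc_lt_top⟩
    set f2 : ℝ → ℝ → ℝ := fun t l => if l < km t then gm t else 0 with hf2_def
    have hFmeas : Measurable (Function.uncurry f2) := by
      have h1 : MeasurableSet {p : ℝ × ℝ | p.2 < km p.1} :=
        measurableSet_lt measurable_snd (hkm_meas.comp measurable_fst)
      exact Measurable.ite h1 (hgm_meas.comp measurable_fst) measurable_const
    -- integrability on the product
    have hFint : Integrable (Function.uncurry f2)
        ((volume.restrict (Set.Ioc (0:ℝ) T)).prod (volume.restrict (Set.Ioc c0 C))) := by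
      refine ⟨hFmeas.aestronglyMeasurable, ?_⟩
      have hgb : ∀ᵐ t ∂(volume.restrict (Set.Ioc (0:ℝ) T)), |gm t| ≤ M2 + M1 := by
        filter_upwards [hgm_ae, hIccae] with t h1 h2
        rw [← h1]; exact hMg t h2
      set N : Set ℝ := toMeasurable (volume.restrict (Set.Ioc (0:ℝ) T))
        {t | ¬ |gm t| ≤ M2 + M1} with hN_def
      have hNnull : (volume.restrict (Set.Ioc (0:ℝ) T)) N = 0 := by
        rw [hN_def, measure_toMeasurable]
        exact hgb
      have hbnd : ∀ᵐ p ∂((volume.restrict (Set.Ioc (0:ℝ) T)).prod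
          (volume.restrict (Set.Ioc c0 C))), ‖Function.uncurry f2 p‖ ≤ M2 + M1 := by
        rw [ae_iff]
        refine measure_mono_null (fun p hp => ?_) (?_ :
          ((volume.restrict (Set.Ioc (0:ℝ) T)).prod (volume.restrict (Set.Ioc c0 C)))
            (N ×ˢ (Set.univ : Set ℝ)) = 0)
        · simp only [Set.mem_setOf_eq, not_le] at hp
          constructor
          · by_contra hp1
            have hgood : |gm p.1| ≤ M2 + M1 := by
              by_contra hbad
              exact hp1 (subset_toMeasurable _ _ hbad)
            have : ‖Function.uncurry f2 p‖ ≤ M2 + M1 := by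
              rw [Function.uncurry]
              simp only [hf2_def]
              rw [Real.norm_eq_abs]
              split
              · exact hgood
              · rw [abs_zero]
                have : (0:ℝ) ≤ |gm p.1| := abs_nonneg _
                linarith
            exact absurd this (not_le.2 hp)
          · trivial
        · rw [Measure.prod_prod, hNnull, zero_mul]
      exact HasFiniteIntegral.of_bounded hbnd
    have hswap := MeasureTheory.integral_integral_swap hFint
    -- LHS of swap equals ∫ (k - c0) * g'
    have hLHS : (∫ t in Set.Ioc (0:ℝ) T, ∫ l in Set.Ioc c0 C, f2 t l) =
        ∫ t in Set.Ioc (0:ℝ) T, (k t - c0) * g' t := by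
      refine integral_congr_ae ?_
      filter_upwards [hkm_ae, hgm_ae, hIccae] with t h1 h2 h3
      have hkt1 : c0 ≤ k t := hklb t
      have hkt2 : k t ≤ C := hkub t h3
      have hfun : (fun l => f2 t l) = Set.indicator (Set.Iio (k t)) (fun _ => g' t) := by
        funext l
        simp only [hf2_def, ← h1, ← h2, Set.indicator_apply, Set.mem_Iio]
      rw [hfun, setIntegral_indicator measurableSet_Iio]
      have hseteq : Set.Ioc c0 C ∩ Set.Iio (k t) = Set.Ioo c0 (k t) := by
        ext l
        simp only [Set.mem_inter_iff, Set.mem_Ioc, Set.mem_Iio, Set.mem_Ioo]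
        exact ⟨fun h => ⟨h.1.1, h.2⟩, fun h => ⟨⟨h.1, (le_of_lt h.2).trans hkt2⟩, h.2⟩⟩
      rw [hseteq, setIntegral_const, Real.volume_real_Ioo_of_le (by linarith),
        smul_eq_mul]
    -- RHS of swap is nonnegative
    have hRHS : ∀ l ∈ Set.Ioc c0 C, 0 ≤ ∫ t in Set.Ioc (0:ℝ) T, f2 t l := by
      intro l hl
      have hcongr : (∫ t in Set.Ioc (0:ℝ) T, f2 t l) =
          ∫ t in Set.Ioc (0:ℝ) T, (if l < k t then g' t else 0) := by
        refine integral_congr_ae ?_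
        filter_upwards [hkm_ae, hgm_ae] with t h1 h2
        simp only [hf2_def, ← h1, ← h2]
      rw [hcongr]
      by_cases hS : (D ∩ {t | l < k t}).Nonempty
      · -- τ := inf of the set where k > l
        set S : Set ℝ := D ∩ {t | l < k t} with hS_def
        set τ : ℝ := sInf S with hτ_def
        have hbdd : BddBelow S := ⟨0, fun x hx => hx.1.1.1.le⟩
        obtain ⟨t0, ht0⟩ := id hS
        have hτ0 : 0 ≤ τ := le_csInf hS (fun x hx => hx.1.1.1.le)
        have hτT : τ ≤ T := (csInf_le hbdd ht0).trans ht0.1.1.2.le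
        have hτnull : ∀ᵐ t ∂(volume.restrict (Set.Ioc (0:ℝ) T)), t ≠ τ := by
          rw [ae_iff]
          refine measure_mono_null (fun x hx => ?_) (?_ :
            (volume.restrict (Set.Ioc (0:ℝ) T)) {τ} = 0)
          · simp only [Set.mem_setOf_eq, not_not] at hx
            simp [hx]
          · refine le_antisymm (le_trans (Measure.restrict_le_self _) ?_) zero_le
            simp
        have hptw : ∀ᵐ t ∂(volume.restrict (Set.Ioc (0:ℝ) T)),
            (if l < k t then g' t else 0) = Set.indicator (Set.Ioc τ T) g' t := by
          filter_upwards [hDae, hτnull] with t htD htne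
          rcases lt_trichotomy t τ with h | h | h
          · have hnot : ¬ l < k t := fun hlt =>
              absurd (csInf_le hbdd (Set.mem_inter htD hlt)) (not_le.2 h)
            rw [if_neg hnot, Set.indicator_of_notMem]
            intro hmem
            exact absurd hmem.1 (not_lt.2 h.le)
          · exact absurd h htne
          · obtain ⟨t', ht'S, ht'lt⟩ := exists_lt_of_csInf_lt hS h
            have hlk : l < k t := lt_of_lt_of_le ht'S.2 (hkD_mono t' ht'S.1 t htD ht'lt.le)
            rw [if_pos hlk, Set.indicator_of_mem (Set.mem_Ioc.2 ⟨h, htD.1.2.le⟩)]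
        rw [integral_congr_ae hptw, MeasureTheory.integral_indicator measurableSet_Ioc,
          Measure.restrict_restrict measurableSet_Ioc]
        have hseteq : Set.Ioc τ T ∩ Set.Ioc (0:ℝ) T = Set.Ioc τ T := by
          rw [Set.Ioc_inter_Ioc, max_eq_left hτ0, min_self]
        rw [hseteq, hftcg τ hτ0 hτT]
        -- it remains to show B τ ≤ Bhat τ
        have hge : B τ ≤ Bhat τ := by
          by_contra hgt
          push_neg at hgt
          have hτIoo : τ ∈ Set.Ioo (0:ℝ) T := by
            rcases eq_or_lt_of_le hτ0 with h0 | h0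
            · rw [← h0, ← h_start] at hgt; exact absurd hgt (lt_irrefl _)
            rcases eq_or_lt_of_le hτT with hT' | hT'
            · rw [hT', ← h_end] at hgt; exact absurd hgt (lt_irrefl _)
            exact ⟨h0, hT'⟩
          have hcB : ContinuousAt B τ :=
            hB_cont.continuousAt (Icc_mem_nhds hτIoo.1 hτIoo.2)
          have hcBhat : ContinuousAt Bhat τ :=
            hBhat_cont.continuousAt (Icc_mem_nhds hτIoo.1 hτIoo.2)
          have hev : ∀ᶠ u in nhds τ, Bhat u < B u ∧ u ∈ Set.Ioo (0:ℝ) T :=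
            (hcBhat.eventually_lt hcB hgt).and
              (eventually_of_mem (Ioo_mem_nhds hτIoo.1 hτIoo.2) (fun u hu => hu))
          obtain ⟨a', b', hmemab, hsub⟩ := mem_nhds_iff_exists_Ioo_subset.1 hev
          set a2 : ℝ := max a' 0 with ha2
          set b2 : ℝ := min b' T with hb2
          have hτab2 : τ ∈ Set.Ioo a2 b2 :=
            ⟨max_lt hmemab.1 hτIoo.1, lt_min hmemab.2 hτIoo.2⟩
          have hsub2 : Set.Ioo a2 b2 ⊆ Set.Ioo a' b' :=
            Set.Ioo_subset_Ioo (le_max_left _ _) (min_le_left _ _)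
          obtain ⟨mc, hmc⟩ := h_affine a2 b2 (le_max_right _ _) (hτab2.1.trans hτab2.2)
            (min_le_right _ _) (fun u hu => (hsub (hsub2 hu)).1)
          obtain ⟨t1, ht1⟩ := ((Set.Ioo_infinite hτab2.1).diff s.finite_toSet).nonempty
          obtain ⟨t2, ht2⟩ := ((Set.Ioo_infinite hτab2.2).diff s.finite_toSet).nonempty
          have ht1ab : t1 ∈ Set.Ioo a2 b2 := ⟨ht1.1.1, ht1.1.2.trans hτab2.2⟩
          have ht2ab : t2 ∈ Set.Ioo a2 b2 := ⟨hτab2.1.trans ht2.1.1, ht2.1.2⟩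
          have ht1D : t1 ∈ D := ⟨(hsub (hsub2 ht1ab)).2, ht1.2⟩
          have ht2D : t2 ∈ D := ⟨(hsub (hsub2 ht2ab)).2, ht2.2⟩
          have hder1 : Bhat' t1 = mc.1 := affine_hasDerivAt_eq hmc ht1ab (hd1 t1 ht1D)
          have hder2 : Bhat' t2 = mc.1 := affine_hasDerivAt_eq hmc ht2ab (hd1 t2 ht2D)
          have hk1 : ¬ l < k t1 := fun h =>
            absurd (csInf_le hbdd (Set.mem_inter ht1D h)) (not_le.2 ht1.1.2)
          have hk2 : l < k t2 := by
            obtain ⟨t', ht'S, hlt'⟩ := exists_lt_of_csInf_lt hS ht2.1.1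
            exact lt_of_lt_of_le ht'S.2 (hkD_mono t' ht'S.1 t2 ht2D hlt'.le)
          apply hk1
          have : k t1 = k t2 := by
            simp only [hk_def, hder1, hder2]
          rw [this]
          exact hk2
        rw [h_end]
        linarith
      · -- the set where k > l is empty : integral is 0
        have hzero : ∀ᵐ t ∂(volume.restrict (Set.Ioc (0:ℝ) T)),
            (if l < k t then g' t else 0) = 0 := by
          filter_upwards [hDae] with t ht
          rw [if_neg]
          intro hlt
          exact hS ⟨t, Set.mem_inter ht hlt⟩
        rw [integral_congr_ae hzero, MeasureTheory.integral_zero]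
    -- assemble
    have hsplit : (∫ t in Set.Ioc (0:ℝ) T, k t * g' t) =
        c0 * (∫ t in Set.Ioc (0:ℝ) T, g' t) + ∫ t in Set.Ioc (0:ℝ) T, (k t - c0) * g' t := by
      rw [← MeasureTheory.integral_const_mul]
      have hI5 : IntegrableOn (fun t => (k t - c0) * g' t) (Set.Ioc 0 T) volume := by
        have := I3.sub (I4.const_mul c0)
        refine this.congr ?_
        refine Filter.Eventually.of_forall (fun t => ?_)
        simp only [Pi.sub_apply, hg'_def]
        ring
      rw [← integral_add (I4.const_mul c0) hI5]
      refine integral_congr_ae (Filter.Eventually.of_forall (fun t => ?_))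
      ring
    have hzero : (∫ t in Set.Ioc (0:ℝ) T, g' t) = 0 := by
      rw [hftcg 0 le_rfl hT.le, h_start, h_end]; ring
    rw [hsplit, hzero, mul_zero, zero_add, ← hLHS, hswap]
    exact setIntegral_nonneg measurableSet_Ioc hRHS
  rw [intervalIntegral.integral_of_le hT.le, intervalIntegral.integral_of_le hT.le]
  linarith
end
end
end

section
/- Let E_s, E_r, B_s : [0,∞) → [0,∞) be nondecreasing and let r_sr, r_rd be rate functions. For T > 0 let D(T) denote the two-hop maximum throughput over the deadline [0,T]. Then for all 0 < t₀ < t, D(t) ≤ D(t₀) + (t − t₀) · r_rd( E_r(t) / (t − t₀) ). -/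
open MeasureTheory Set Filter intervalIntegral

noncomputable section

/-- The two-hop maximum throughput by deadline `T`. -/
def MaxThroughput (Es Er Bs rsr rrd : ℝ → ℝ) (T : ℝ) : ℝ :=
  sSup {x : ℝ | ∃ psr prd : ℝ → ℝ,
    TwoHopFeasible T Es Er Bs rsr rrd psr prd ∧
    x = ∫ t in (0:ℝ)..T, rrd (prd t)}

private lemma rate_nonneg {r : ℝ → ℝ} (hr : IsRateFunction r) {x : ℝ} (hx : 0 ≤ x) :
    0 ≤ r x := by
  rcases eq_or_lt_of_le hx with h | h
  · rw [← h, hr.2.2.2.1]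
  · have := hr.2.1 (Set.mem_Ici.mpr le_rfl) (Set.mem_Ici.mpr hx) h
    rw [hr.2.2.2.1] at this
    exact this.le

/-- Key inequality in the proof of Lemma 3.3: the throughput gained between
deadlines `t₀ < t` is at most `(t - t₀) · r_rd(E_r(t) / (t - t₀))`. -/
theorem maxThroughput_increment_bound
    (Es Er Bs : ℝ → ℝ)
    (hEs_nonneg : ∀ t : ℝ, 0 ≤ t → 0 ≤ Es t) (hEs_mono : MonotoneOn Es (Set.Ici 0))
    (hEr_nonneg : ∀ t : ℝ, 0 ≤ t → 0 ≤ Er t) (hEr_mono : MonotoneOn Er (Set.Ici 0))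
    (hBs_nonneg : ∀ t : ℝ, 0 ≤ t → 0 ≤ Bs t) (hBs_mono : MonotoneOn Bs (Set.Ici 0))
    (rsr rrd : ℝ → ℝ) (hrsr : IsRateFunction rsr) (hrrd : IsRateFunction rrd) :
    ∀ t₀ t : ℝ, 0 < t₀ → t₀ < t →
      MaxThroughput Es Er Bs rsr rrd t ≤
        MaxThroughput Es Er Bs rsr rrd t₀ + (t - t₀) * rrd (Er t / (t - t₀)) := by
  intro t₀ t ht₀ ht₀t
  have ht0 : (0:ℝ) ≤ t₀ := ht₀.le
  have ht : (0:ℝ) ≤ t := le_trans ht0 ht₀t.le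
  have htt : 0 < t - t₀ := sub_pos.mpr ht₀t
  have hc : 0 ≤ Er t / (t - t₀) := div_nonneg (hEr_nonneg t ht) htt.le
  have hrc : 0 ≤ rrd (Er t / (t - t₀)) := rate_nonneg hrrd hc
  -- the set at deadline t₀
  set S₀ : Set ℝ := {x : ℝ | ∃ psr prd : ℝ → ℝ,
    TwoHopFeasible t₀ Es Er Bs rsr rrd psr prd ∧
    x = ∫ s in (0:ℝ)..t₀, rrd (prd s)} with hS₀
  have hbdd : BddAbove S₀ := by
    refine ⟨Bs t₀, ?_⟩
    rintro y ⟨psr, prd, hf, rfl⟩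
    exact le_trans (hf.2.2.2.2.2.2.2.2 t₀ ⟨ht0, le_rfl⟩)
      (hf.2.2.2.2.2.2.2.1 t₀ ⟨ht0, le_rfl⟩)
  have h0mem : (0:ℝ) ∈ S₀ := by
    refine ⟨0, 0, ?_, by simp [hrrd.2.2.2.1]⟩
    refine ⟨intervalIntegrable_const, intervalIntegrable_const, ?_, ?_, ?_, ?_, ?_, ?_, ?_⟩
    · simpa using (intervalIntegrable_const (c := rsr 0) (μ := volume) (a := (0:ℝ)) (b := t₀))
    · simpa using (intervalIntegrable_const (c := rrd 0) (μ := volume) (a := (0:ℝ)) (b := t₀))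
    · intro τ hτ; exact ⟨le_rfl, le_rfl⟩
    · intro τ hτ; simpa using hEs_nonneg τ hτ.1
    · intro τ hτ; simpa using hEr_nonneg τ hτ.1
    · intro τ hτ
      simp only [Pi.zero_apply, hrsr.2.2.2.1, intervalIntegral.integral_const, smul_zero]
      exact hBs_nonneg τ hτ.1
    · intro τ hτ
      simp [hrsr.2.2.2.1, hrrd.2.2.2.1]
  have hD0 : MaxThroughput Es Er Bs rsr rrd t₀ = sSup S₀ := rfl
  have hD0_nonneg : 0 ≤ MaxThroughput Es Er Bs rsr rrd t₀ := by
    rw [hD0]; exact le_csSup hbdd h0mem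
  rw [show MaxThroughput Es Er Bs rsr rrd t = sSup {x : ℝ | ∃ psr prd : ℝ → ℝ,
    TwoHopFeasible t Es Er Bs rsr rrd psr prd ∧
    x = ∫ s in (0:ℝ)..t, rrd (prd s)} from rfl]
  apply Real.sSup_le
  · rintro x ⟨psr, prd, hf, rfl⟩
    obtain ⟨hips, hipr, hirs, hirr, hnn, hEsC, hErC, hBsC, hRel⟩ := hf
    have hsub₀ : Set.uIcc (0:ℝ) t₀ ⊆ Set.uIcc 0 t :=
      Set.uIcc_subset_uIcc Set.left_mem_uIcc (Set.mem_uIcc.mpr (Or.inl ⟨ht0, ht₀t.le⟩))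
    have hsub₁ : Set.uIcc t₀ t ⊆ Set.uIcc 0 t :=
      Set.uIcc_subset_uIcc (Set.mem_uIcc.mpr (Or.inl ⟨ht0, ht₀t.le⟩)) Set.right_mem_uIcc
    have hIcc : Set.Icc (0:ℝ) t₀ ⊆ Set.Icc 0 t := Set.Icc_subset_Icc_right ht₀t.le
    have hips₀ := hips.mono_set hsub₀
    have hipr₀ := hipr.mono_set hsub₀
    have hirs₀ := hirs.mono_set hsub₀
    have hirr₀ := hirr.mono_set hsub₀
    have hipr₁ := hipr.mono_set hsub₁
    have hirr₁ := hirr.mono_set hsub₁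
    have hmem : (∫ s in (0:ℝ)..t₀, rrd (prd s)) ∈ S₀ := by
      refine ⟨psr, prd, ⟨hips₀, hipr₀, hirs₀, hirr₀,
        fun τ hτ => hnn τ (hIcc hτ), fun τ hτ => hEsC τ (hIcc hτ),
        fun τ hτ => hErC τ (hIcc hτ), fun τ hτ => hBsC τ (hIcc hτ),
        fun τ hτ => hRel τ (hIcc hτ)⟩, rfl⟩
    have hsplit : (∫ s in (0:ℝ)..t, rrd (prd s)) =
        (∫ s in (0:ℝ)..t₀, rrd (prd s)) + ∫ s in t₀..t, rrd (prd s) :=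
      (intervalIntegral.integral_add_adjacent_intervals hirr₀ hirr₁).symm
    -- Jensen's inequality on [t₀, t]
    set μ : Measure ℝ := volume.restrict (Set.Ioc t₀ t) with hμ
    haveI : IsFiniteMeasure μ := by
      constructor
      simp only [hμ, Measure.restrict_apply_univ, Real.volume_Ioc]
      exact ENNReal.ofReal_lt_top
    haveI : NeZero μ := by
      constructor
      intro h
      rw [hμ, Measure.restrict_eq_zero] at h
      simp only [Real.volume_Ioc, ENNReal.ofReal_eq_zero] at h
      linarith
    have hμuniv : (μ Set.univ).toReal = t - t₀ := by
      simp [hμ, Real.volume_Ioc, ENNReal.toReal_ofReal htt.le]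
    have hIntf : Integrable prd μ :=
      (intervalIntegrable_iff_integrableOn_Ioc_of_le ht₀t.le).mp hipr₁
    have hIntgf : Integrable (rrd ∘ prd) μ :=
      (intervalIntegrable_iff_integrableOn_Ioc_of_le ht₀t.le).mp hirr₁
    have hae : ∀ᵐ x ∂μ, prd x ∈ Set.Ici (0:ℝ) :=
      ae_restrict_of_forall_mem measurableSet_Ioc
        (fun x hx => (hnn x ⟨le_trans ht0 hx.1.le, hx.2⟩).2)
    have hJ := hrrd.2.2.1.le_map_average hrrd.1 isClosed_Ici hae hIntf hIntgf
    have havg : ⨍ x, prd x ∂μ = (∫ s in t₀..t, prd s) / (t - t₀) := by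
      rw [average_eq, measureReal_def, hμuniv, smul_eq_mul, intervalIntegral.integral_of_le ht₀t.le,
        inv_mul_eq_div]
    have havgg : ⨍ x, rrd (prd x) ∂μ = (∫ s in t₀..t, rrd (prd s)) / (t - t₀) := by
      rw [average_eq, measureReal_def, hμuniv, smul_eq_mul, intervalIntegral.integral_of_le ht₀t.le,
        inv_mul_eq_div]
    have hIle : (∫ s in t₀..t, prd s) ≤ Er t := by
      have h1 : (∫ s in (0:ℝ)..t₀, prd s) + ∫ s in t₀..t, prd s = ∫ s in (0:ℝ)..t, prd s :=
        intervalIntegral.integral_add_adjacent_intervals hipr₀ hipr₁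
      have h2 := hErC t ⟨ht, le_rfl⟩
      have h3 : 0 ≤ ∫ s in (0:ℝ)..t₀, prd s :=
        intervalIntegral.integral_nonneg ht0 (fun u hu => (hnn u (hIcc hu)).2)
      linarith
    have havg_nonneg : 0 ≤ ⨍ x, prd x ∂μ := by
      rw [havg]
      have : 0 ≤ ∫ s in t₀..t, prd s :=
        intervalIntegral.integral_nonneg ht₀t.le
          (fun u hu => (hnn u ⟨le_trans ht0 hu.1, hu.2⟩).2)
      positivity
    have havg_le : ⨍ x, prd x ∂μ ≤ Er t / (t - t₀) := by
      rw [havg]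
      gcongr
    have hmono : rrd (⨍ x, prd x ∂μ) ≤ rrd (Er t / (t - t₀)) := by
      rcases eq_or_lt_of_le havg_le with h | h
      · rw [h]
      · exact (hrrd.2.1 (Set.mem_Ici.mpr havg_nonneg) (Set.mem_Ici.mpr hc) h).le
    have h2 : ∫ s in t₀..t, rrd (prd s) ≤ (t - t₀) * rrd (Er t / (t - t₀)) := by
      have := le_trans hJ hmono
      rw [havgg, div_le_iff₀ htt] at this
      linarith [this]
    rw [hsplit]
    exact add_le_add (le_csSup hbdd hmem) h2
  · exact add_nonneg hD0_nonneg (mul_nonneg htt.le hrc)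
end
end

section
/- Let E_s, E_r, B_s : [0,∞) → [0,∞) be nondecreasing with E_r bounded on every compact interval, and let r_sr, r_rd be rate functions with lim_{p→∞} r_rd(p)/p = 0. For T > 0 let D(T) denote the two-hop maximum throughput over the deadline [0,T]. Let B₀ > 0 and suppose C = {t > 0 : D(t) = B₀} is nonempty. Then T_min := inf C is attained (i.e., D(T_min) = B₀), and T_min = inf{ T > 0 : D(T) ≥ B₀ }. In particular, for every deadline T and every two-hop feasible pair (p_sr, p_rd) on [0,T] with ∫₀ᵀ r_rd(p_rd(t)) dt ≥ B₀, one has T ≥ T_min; thus the minimum completion time for delivering B₀ units of data equals T_min, the first time at which the maximum throughput function reaches B₀. -/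
open MeasureTheory Set Filter intervalIntegral

noncomputable section

/- ### Auxiliary lemmas -/

lemma rate_zero {r : ℝ → ℝ} (h : IsRateFunction r) : r 0 = 0 := h.2.2.2.1

lemma rate_mono {r : ℝ → ℝ} (h : IsRateFunction r) : MonotoneOn r (Set.Ici 0) :=
  h.2.1.monotoneOn

lemma rate_nonneg_s7 {r : ℝ → ℝ} (h : IsRateFunction r) {p : ℝ} (hp : 0 ≤ p) : 0 ≤ r p := by
  have := rate_mono h (Set.self_mem_Ici (a := (0:ℝ))) (Set.mem_Ici.mpr hp) hp
  rwa [rate_zero h] at this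

lemma rate_pos {r : ℝ → ℝ} (h : IsRateFunction r) {K : ℝ} (hK : 0 < K) : 0 < r K := by
  have := h.2.1 (Set.self_mem_Ici (a := (0:ℝ))) (Set.mem_Ici.mpr hK.le) hK
  rwa [rate_zero h] at this

/-- Linear upper bound for a concave rate function with `r 0 = 0`. -/
lemma rate_lin_bound {r : ℝ → ℝ} (h : IsRateFunction r) {K p : ℝ}
    (hK : 0 < K) (hp : 0 ≤ p) : r p ≤ r K + r K / K * p := by
  have hK0 : (0:ℝ) ≤ r K := rate_nonneg_s7 h hK.le
  rcases le_or_gt p K with hpK | hKp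
  · have h1 : r p ≤ r K := rate_mono h (Set.mem_Ici.mpr hp) (Set.mem_Ici.mpr hK.le) hpK
    have h2 : 0 ≤ r K / K * p := mul_nonneg (div_nonneg hK0 hK.le) hp
    linarith
  · have hp0 : 0 < p := hK.trans hKp
    have hb : (0:ℝ) ≤ 1 - K / p := by
      rw [sub_nonneg]
      exact div_le_one_of_le₀ hKp.le hp0.le
    have hconc := h.2.2.1.2 (Set.mem_Ici.mpr hp) (Set.self_mem_Ici (a := (0:ℝ)))
      (div_nonneg hK.le hp0.le) hb (by ring)
    rw [smul_eq_mul, smul_eq_mul, smul_eq_mul, smul_eq_mul, mul_zero, rate_zero h,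
      mul_zero, add_zero, add_zero, div_mul_cancel₀ K hp0.ne'] at hconc
    -- hconc : K / p * r p ≤ r K
    have hmul := mul_le_mul_of_nonneg_right hconc (le_of_lt (div_pos hp0 hK))
    have hleft : K / p * r p * (p / K) = r p := by
      field_simp
    rw [hleft] at hmul
    have : r K * (p / K) = r K / K * p := by ring
    rw [this] at hmul
    linarith

/-- Integral bound from the linear upper bound. -/
lemma integral_rate_le {r : ℝ → ℝ} (hr : IsRateFunction r) {K a b : ℝ} (hK : 0 < K)
    (hab : a ≤ b) {prd : ℝ → ℝ}
    (h1 : IntervalIntegrable prd volume a b)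
    (h2 : IntervalIntegrable (fun s => r (prd s)) volume a b)
    (hnn : ∀ s ∈ Set.Icc a b, 0 ≤ prd s) :
    (∫ s in a..b, r (prd s)) ≤ (b - a) * r K + r K / K * ∫ s in a..b, prd s := by
  have hmono : (∫ s in a..b, r (prd s)) ≤ ∫ s in a..b, (r K + r K / K * prd s) := by
    apply intervalIntegral.integral_mono_on hab h2
      (intervalIntegrable_const.add (h1.const_mul _))
    intro s hs
    exact rate_lin_bound hr hK (hnn s hs)
  have hcalc : (∫ s in a..b, (r K + r K / K * prd s))
      = (b - a) * r K + r K / K * ∫ s in a..b, prd s := by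
    rw [intervalIntegral.integral_add intervalIntegrable_const (h1.const_mul _),
      intervalIntegral.integral_const, intervalIntegral.integral_const_mul, smul_eq_mul]
  rw [hcalc] at hmono
  exact hmono

/-- Extension by zero: integrability and integral values. -/
lemma ext_aux {T t : ℝ} (hT : 0 ≤ T) (ht : 0 ≤ t) {g : ℝ → ℝ}
    (hg : IntervalIntegrable g volume 0 T) :
    IntervalIntegrable (fun s => if s ≤ T then g s else 0) volume 0 t ∧
      (t ≤ T → (∫ s in (0:ℝ)..t, if s ≤ T then g s else 0) = ∫ s in (0:ℝ)..t, g s) ∧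
      (T ≤ t → (∫ s in (0:ℝ)..t, if s ≤ T then g s else 0) = ∫ s in (0:ℝ)..T, g s) := by
  set f : ℝ → ℝ := fun s => if s ≤ T then g s else 0 with hf
  have heq : Set.EqOn f g (Set.uIcc (0:ℝ) T) := by
    intro s hs
    rw [Set.uIcc_of_le hT] at hs
    simp [hf, hs.2]
  have hfT : IntervalIntegrable f volume 0 T := by
    apply hg.congr
    intro s hs
    exact (heq (Set.uIoc_subset_uIcc hs)).symm
  have hA : t ≤ T → (∫ s in (0:ℝ)..t, f s) = ∫ s in (0:ℝ)..t, g s := by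
    intro h
    refine intervalIntegral.integral_congr ?_
    intro s hs
    rw [Set.uIcc_of_le ht] at hs
    simp [hf, hs.2.trans h]
  have hB : T ≤ t → IntervalIntegrable f volume T t ∧ (∫ s in T..t, f s) = 0 := by
    intro h
    have hzero : ∀ᵐ s ∂(volume : Measure ℝ), s ∈ Set.uIoc T t → f s = (fun _ => (0:ℝ)) s := by
      refine Filter.Eventually.of_forall fun s hs => ?_
      rw [Set.uIoc_of_le h] at hs
      simp [hf, not_le.mpr hs.1]
    constructor
    · apply (_root_.intervalIntegrable_const (μ := volume) (a := T) (b := t) (c := (0:ℝ))).congr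
      intro s hs
      rw [Set.uIoc_of_le h] at hs
      simp [hf, not_le.mpr hs.1]
    · rw [intervalIntegral.integral_congr_ae hzero]
      simp
  refine ⟨?_, hA, fun h => ?_⟩
  · rcases le_total t T with h | h
    · exact hfT.mono_set (Set.uIcc_subset_uIcc Set.left_mem_uIcc
        (Set.mem_uIcc.mpr (Or.inl ⟨ht, h⟩)))
    · exact hfT.trans (hB h).1
  · have hsplit := intervalIntegral.integral_add_adjacent_intervals hfT (hB h).1
    have h0T : (∫ s in (0:ℝ)..T, f s) = ∫ s in (0:ℝ)..T, g s :=
      intervalIntegral.integral_congr heq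
    rw [← hsplit, (hB h).2, add_zero, h0T]

/-- The zero policy is always feasible. -/
lemma feasible_zero (Es Er Bs rsr rrd : ℝ → ℝ)
    (hEs : ∀ t : ℝ, 0 ≤ t → 0 ≤ Es t) (hEr : ∀ t : ℝ, 0 ≤ t → 0 ≤ Er t)
    (hBs : ∀ t : ℝ, 0 ≤ t → 0 ≤ Bs t)
    (hrsr0 : rsr 0 = 0) (hrrd0 : rrd 0 = 0) (T : ℝ) :
    TwoHopFeasible T Es Er Bs rsr rrd (fun _ => 0) (fun _ => 0) := by
  refine ⟨intervalIntegrable_const, intervalIntegrable_const, ?_, ?_, ?_, ?_, ?_, ?_, ?_⟩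
  · simpa [hrsr0] using (intervalIntegrable_const (μ := volume) (a := (0:ℝ)) (b := T) (c := (0:ℝ)))
  · simpa [hrrd0] using (intervalIntegrable_const (μ := volume) (a := (0:ℝ)) (b := T) (c := (0:ℝ)))
  · intro t _; exact ⟨le_refl 0, le_refl 0⟩
  · intro t ht; simpa using hEs t ht.1
  · intro t ht; simpa using hEr t ht.1
  · intro t ht; simpa [hrsr0] using hBs t ht.1
  · intro t _; simp [hrsr0, hrrd0]

/-- Restriction of a feasible pair to a shorter deadline. -/
lemma feasible_restrict {Es Er Bs rsr rrd psr prd : ℝ → ℝ} {T T' : ℝ}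
    (h0 : 0 ≤ T') (hle : T' ≤ T)
    (h : TwoHopFeasible T Es Er Bs rsr rrd psr prd) :
    TwoHopFeasible T' Es Er Bs rsr rrd psr prd := by
  obtain ⟨i1, i2, i3, i4, c1, c2, c3, c4, c5⟩ := h
  have hsub : Set.uIcc (0:ℝ) T' ⊆ Set.uIcc (0:ℝ) T :=
    Set.uIcc_subset_uIcc Set.left_mem_uIcc (Set.mem_uIcc.mpr (Or.inl ⟨h0, hle⟩))
  have hIcc : Set.Icc (0:ℝ) T' ⊆ Set.Icc 0 T := Set.Icc_subset_Icc_right hle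
  exact ⟨i1.mono_set hsub, i2.mono_set hsub, i3.mono_set hsub, i4.mono_set hsub,
    fun t ht => c1 t (hIcc ht), fun t ht => c2 t (hIcc ht), fun t ht => c3 t (hIcc ht),
    fun t ht => c4 t (hIcc ht), fun t ht => c5 t (hIcc ht)⟩

/-- Extension by zero of a feasible pair to a longer deadline. -/
lemma feasible_extend {Es Er Bs rsr rrd psr prd : ℝ → ℝ} {T T' : ℝ}
    (hT : 0 ≤ T) (hle : T ≤ T')
    (hEs_mono : MonotoneOn Es (Set.Ici 0)) (hEr_mono : MonotoneOn Er (Set.Ici 0))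
    (hBs_mono : MonotoneOn Bs (Set.Ici 0))
    (hrsr0 : rsr 0 = 0) (hrrd0 : rrd 0 = 0)
    (h : TwoHopFeasible T Es Er Bs rsr rrd psr prd) :
    TwoHopFeasible T' Es Er Bs rsr rrd
      (fun s => if s ≤ T then psr s else 0) (fun s => if s ≤ T then prd s else 0) ∧
    (∫ t in (0:ℝ)..T', rrd ((fun s => if s ≤ T then prd s else 0) t))
      = ∫ t in (0:ℝ)..T, rrd (prd t) := by
  obtain ⟨i1, i2, i3, i4, c1, c2, c3, c4, c5⟩ := h
  have hT' : 0 ≤ T' := hT.trans hle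
  have hcomp_sr : (fun s => rsr ((fun u => if u ≤ T then psr u else 0) s))
      = fun s => if s ≤ T then rsr (psr s) else 0 := by
    funext s; by_cases hs : s ≤ T <;> simp [hs, hrsr0]
  have hcomp_rd : (fun s => rrd ((fun u => if u ≤ T then prd u else 0) s))
      = fun s => if s ≤ T then rrd (prd s) else 0 := by
    funext s; by_cases hs : s ≤ T <;> simp [hs, hrrd0]
  constructor
  · refine ⟨(ext_aux hT hT' i1).1, (ext_aux hT hT' i2).1, ?_, ?_, ?_, ?_, ?_, ?_, ?_⟩
    · rw [hcomp_sr]; exact (ext_aux hT hT' i3).1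
    · rw [hcomp_rd]; exact (ext_aux hT hT' i4).1
    · intro t ht
      by_cases hs : t ≤ T
      · simpa [hs] using c1 t ⟨ht.1, hs⟩
      · simp [hs]
    · intro t ht
      rcases le_total t T with hcase | hcase
      · rw [(ext_aux hT ht.1 i1).2.1 hcase]
        exact c2 t ⟨ht.1, hcase⟩
      · rw [(ext_aux hT ht.1 i1).2.2 hcase]
        exact (c2 T ⟨hT, le_refl T⟩).trans
          (hEs_mono (Set.mem_Ici.mpr hT) (Set.mem_Ici.mpr ht.1) hcase)
    · intro t ht
      rcases le_total t T with hcase | hcase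
      · rw [(ext_aux hT ht.1 i2).2.1 hcase]
        exact c3 t ⟨ht.1, hcase⟩
      · rw [(ext_aux hT ht.1 i2).2.2 hcase]
        exact (c3 T ⟨hT, le_refl T⟩).trans
          (hEr_mono (Set.mem_Ici.mpr hT) (Set.mem_Ici.mpr ht.1) hcase)
    · intro t ht
      have hrw : (∫ s in (0:ℝ)..t, rsr ((fun u => if u ≤ T then psr u else 0) s))
          = ∫ s in (0:ℝ)..t, (fun s => if s ≤ T then rsr (psr s) else 0) s := by
        rw [hcomp_sr]
      rw [hrw]
      rcases le_total t T with hcase | hcase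
      · rw [(ext_aux hT ht.1 i3).2.1 hcase]
        exact c4 t ⟨ht.1, hcase⟩
      · rw [(ext_aux hT ht.1 i3).2.2 hcase]
        exact (c4 T ⟨hT, le_refl T⟩).trans
          (hBs_mono (Set.mem_Ici.mpr hT) (Set.mem_Ici.mpr ht.1) hcase)
    · intro t ht
      have hrw1 : (∫ s in (0:ℝ)..t, rsr ((fun u => if u ≤ T then psr u else 0) s))
          = ∫ s in (0:ℝ)..t, (fun s => if s ≤ T then rsr (psr s) else 0) s := by
        rw [hcomp_sr]
      have hrw2 : (∫ s in (0:ℝ)..t, rrd ((fun u => if u ≤ T then prd u else 0) s))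
          = ∫ s in (0:ℝ)..t, (fun s => if s ≤ T then rrd (prd s) else 0) s := by
        rw [hcomp_rd]
      rw [hrw1, hrw2]
      rcases le_total t T with hcase | hcase
      · rw [(ext_aux hT ht.1 i3).2.1 hcase, (ext_aux hT ht.1 i4).2.1 hcase]
        exact c5 t ⟨ht.1, hcase⟩
      · rw [(ext_aux hT ht.1 i3).2.2 hcase, (ext_aux hT ht.1 i4).2.2 hcase]
        exact c5 T ⟨hT, le_refl T⟩
  · have hrw2 : (∫ s in (0:ℝ)..T', rrd ((fun u => if u ≤ T then prd u else 0) s))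
        = ∫ s in (0:ℝ)..T', (fun s => if s ≤ T then rrd (prd s) else 0) s := by
      rw [hcomp_rd]
    rw [hrw2, (ext_aux hT hT' i4).2.2 hle]

/-- Theorem 3.4 (completion time minimization): if the level set
`C = {t > 0 : D(t) = B₀}` is nonempty, then `T_min = inf C` is attained,
equals the first time the maximum throughput reaches `B₀`, and no feasible pair
can deliver `B₀` units of data by an earlier deadline. -/
theorem completion_time_minimization
    (Es Er Bs : ℝ → ℝ)
    (hEs_nonneg : ∀ t : ℝ, 0 ≤ t → 0 ≤ Es t) (hEs_mono : MonotoneOn Es (Set.Ici 0))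
    (hEr_nonneg : ∀ t : ℝ, 0 ≤ t → 0 ≤ Er t) (hEr_mono : MonotoneOn Er (Set.Ici 0))
    (hEr_bdd : ∀ T : ℝ, 0 < T → ∃ M : ℝ, ∀ t ∈ Set.Icc (0:ℝ) T, Er t ≤ M)
    (hBs_nonneg : ∀ t : ℝ, 0 ≤ t → 0 ≤ Bs t) (hBs_mono : MonotoneOn Bs (Set.Ici 0))
    (rsr rrd : ℝ → ℝ) (hrsr : IsRateFunction rsr) (hrrd : IsRateFunction rrd)
    (hrrd_sublinear : Filter.Tendsto (fun p => rrd p / p) Filter.atTop (nhds 0))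
    (B₀ : ℝ) (hB₀ : 0 < B₀)
    (C : Set ℝ)
    (hC_def : C = {t : ℝ | 0 < t ∧ MaxThroughput Es Er Bs rsr rrd t = B₀})
    (hC_nonempty : C.Nonempty) :
    MaxThroughput Es Er Bs rsr rrd (sInf C) = B₀ ∧
    sInf C = sInf {T : ℝ | 0 < T ∧ B₀ ≤ MaxThroughput Es Er Bs rsr rrd T} ∧
    (∀ T : ℝ, 0 < T → ∀ psr prd : ℝ → ℝ,
      TwoHopFeasible T Es Er Bs rsr rrd psr prd →
      B₀ ≤ (∫ t in (0:ℝ)..T, rrd (prd t)) → sInf C ≤ T) := by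
  classical
  have hrsr0 : rsr 0 = 0 := rate_zero hrsr
  have hrrd0 : rrd 0 = 0 := rate_zero hrrd
  set S : ℝ → Set ℝ := fun T => {x : ℝ | ∃ psr prd : ℝ → ℝ,
    TwoHopFeasible T Es Er Bs rsr rrd psr prd ∧
    x = ∫ t in (0:ℝ)..T, rrd (prd t)} with hS
  have hDS : ∀ T : ℝ, MaxThroughput Es Er Bs rsr rrd T = sSup (S T) := fun T => rfl
  set D : ℝ → ℝ := MaxThroughput Es Er Bs rsr rrd with hD
  -- zero is always achievable
  have hmem0 : ∀ T : ℝ, (0:ℝ) ∈ S T := by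
    intro T
    refine ⟨fun _ => 0, fun _ => 0,
      feasible_zero Es Er Bs rsr rrd hEs_nonneg hEr_nonneg hBs_nonneg hrsr0 hrrd0 T, ?_⟩
    simp [hrrd0]
  -- every element of S T is bounded
  have helem : ∀ T K x : ℝ, 0 ≤ T → 0 < K → x ∈ S T →
      x ≤ T * rrd K + rrd K / K * Er T := by
    intro T K x hT hK hx
    obtain ⟨psr, prd, hfeas, rfl⟩ := hx
    obtain ⟨_, hprd_int, _, hrrd_int, hnn, _, hEr_le, _, _⟩ := hfeas
    have h1 := integral_rate_le hrrd hK hT hprd_int hrrd_int (fun s hs => (hnn s hs).2)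
    have h2 : (∫ t in (0:ℝ)..T, prd t) ≤ Er T := hEr_le T ⟨hT, le_refl T⟩
    have h3 : 0 ≤ rrd K / K := div_nonneg (rate_nonneg_s7 hrrd hK.le) hK.le
    have h4 := mul_le_mul_of_nonneg_left h2 h3
    have h5 : (T - 0) * rrd K = T * rrd K := by ring
    rw [h5] at h1
    linarith
  have hbdd : ∀ T : ℝ, 0 ≤ T → BddAbove (S T) := by
    intro T hT
    exact ⟨T * rrd 1 + rrd 1 / 1 * Er T, fun x hx => helem T 1 x hT one_pos hx⟩
  have hD_le : ∀ T K : ℝ, 0 ≤ T → 0 < K → D T ≤ T * rrd K + rrd K / K * Er T := by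
    intro T K hT hK
    rw [hDS]
    exact csSup_le ⟨0, hmem0 T⟩ (fun x hx => helem T K x hT hK hx)
  -- monotonicity of D
  have hmono : ∀ T T' : ℝ, 0 ≤ T → T ≤ T' → D T ≤ D T' := by
    intro T T' hT hle
    rw [hDS, hDS]
    apply csSup_le ⟨0, hmem0 T⟩
    rintro x ⟨psr, prd, hfeas, rfl⟩
    obtain ⟨hfeas', heq⟩ := feasible_extend hT hle hEs_mono hEr_mono hBs_mono
      hrsr0 hrrd0 hfeas
    have h' := le_csSup (hbdd T' (hT.trans hle))
      (show _ ∈ S T' from ⟨_, _, hfeas', rfl⟩)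
    rwa [heq] at h'
  -- choice of K from sublinearity
  have hK_choice : ∀ ε M : ℝ, 0 < ε → 0 ≤ M → ∃ K : ℝ, 0 < K ∧ rrd K / K * M < ε := by
    intro ε M hε hM
    have h1 : ∀ᶠ p in atTop, rrd p / p < ε / (M + 1) :=
      hrrd_sublinear.eventually_lt_const (by positivity)
    obtain ⟨K, hK1, hK2⟩ := (h1.and (eventually_ge_atTop (1:ℝ))).exists
    have hKpos : (0:ℝ) < K := lt_of_lt_of_le one_pos hK2
    refine ⟨K, hKpos, ?_⟩
    have h0 : 0 ≤ rrd K / K := div_nonneg (rate_nonneg_s7 hrrd hKpos.le) hKpos.le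
    have hM1 : (0:ℝ) < M + 1 := by linarith
    have h3 := mul_lt_mul_of_pos_right hK1 hM1
    rw [div_mul_cancel₀ _ hM1.ne'] at h3
    nlinarith
  -- C is bounded below by a positive number
  set Tm := sInf C with hTm
  have hCsub : ∀ t ∈ C, 0 < t := by
    intro t ht; rw [hC_def] at ht; exact ht.1
  have hCbdd : BddBelow C := ⟨0, fun t ht => (hCsub t ht).le⟩
  obtain ⟨M, hM⟩ := hEr_bdd 1 one_pos
  have hM0 : 0 ≤ M := (hEr_nonneg 0 le_rfl).trans (hM 0 ⟨le_rfl, zero_le_one⟩)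
  obtain ⟨K₁, hK₁, hK₁M⟩ := hK_choice (B₀ / 2) M (by linarith) hM0
  have hrK₁ : 0 < rrd K₁ := rate_pos hrrd hK₁
  have hδ_lb : ∀ t ∈ C, min (B₀ / (2 * rrd K₁)) 1 ≤ t := by
    intro t ht
    have ht0 : 0 < t := hCsub t ht
    have htD : D t = B₀ := by rw [hC_def] at ht; exact ht.2
    rcases le_total t 1 with h1 | h1
    · have hb := hD_le t K₁ ht0.le hK₁
      rw [htD] at hb
      have hErt : Er t ≤ M := hM t ⟨ht0.le, h1⟩
      have hcoef : 0 ≤ rrd K₁ / K₁ := div_nonneg hrK₁.le hK₁.le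
      have h6 := mul_le_mul_of_nonneg_left hErt hcoef
      have key : B₀ / 2 < t * rrd K₁ := by linarith
      refine le_trans (min_le_left _ _) ?_
      rw [div_le_iff₀ (by positivity)]
      nlinarith
    · exact le_trans (min_le_right _ _) h1
  have hδpos : (0:ℝ) < min (B₀ / (2 * rrd K₁)) 1 := lt_min (by positivity) one_pos
  have hTm_pos : 0 < Tm := lt_of_lt_of_le hδpos (le_csInf hC_nonempty hδ_lb)
  have hTm_le : ∀ t ∈ C, Tm ≤ t := fun t ht => csInf_le hCbdd ht
  -- D Tm ≤ B₀
  obtain ⟨t₀, ht₀⟩ := hC_nonempty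
  have hDTm_le : D Tm ≤ B₀ := by
    have ht₀' : 0 < t₀ ∧ D t₀ = B₀ := by rw [hC_def] at ht₀; exact ht₀
    calc D Tm ≤ D t₀ := hmono Tm t₀ hTm_pos.le (hTm_le t₀ ht₀)
      _ = B₀ := ht₀'.2
  -- B₀ ≤ D Tm
  have hDTm_ge : B₀ ≤ D Tm := by
    by_contra hlt
    push_neg at hlt
    set ε := (B₀ - D Tm) / 3 with hε
    have hεpos : 0 < ε := by rw [hε]; linarith
    obtain ⟨M', hM'⟩ := hEr_bdd (Tm + 1) (by linarith)
    have hM'0 : 0 ≤ M' := (hEr_nonneg 0 le_rfl).trans (hM' 0 ⟨le_rfl, by linarith⟩)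
    obtain ⟨K, hK, hKM⟩ := hK_choice ε M' hεpos hM'0
    have hrK : 0 < rrd K := rate_pos hrrd hK
    set η := min (ε / rrd K) 1 with hη
    have hηpos : 0 < η := lt_min (by positivity) one_pos
    obtain ⟨t, htC, htlt⟩ : ∃ t ∈ C, t < Tm + η :=
      exists_lt_of_csInf_lt ⟨t₀, ht₀⟩ (by linarith)
    have htTm : Tm ≤ t := hTm_le t htC
    have htpos : 0 < t := hCsub t htC
    have htD : D t = B₀ := by rw [hC_def] at htC; exact htC.2
    have hlt2 : B₀ - ε < sSup (S t) := by
      rw [← hDS t, htD]; linarith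
    obtain ⟨x, hxS, hxgt⟩ := exists_lt_of_lt_csSup ⟨0, hmem0 t⟩ hlt2
    obtain ⟨psr, prd, hfeas, rfl⟩ := hxS
    have hfeas' := feasible_restrict hTm_pos.le htTm hfeas
    obtain ⟨hpsr_int, hprd_int, hrsr_int, hrrd_int, hnn, _, hEr_le, _, _⟩ := hfeas
    have hsub1 : Set.uIcc (0:ℝ) Tm ⊆ Set.uIcc (0:ℝ) t :=
      Set.uIcc_subset_uIcc Set.left_mem_uIcc (Set.mem_uIcc.mpr (Or.inl ⟨hTm_pos.le, htTm⟩))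
    have hsub2 : Set.uIcc Tm t ⊆ Set.uIcc (0:ℝ) t :=
      Set.uIcc_subset_uIcc (Set.mem_uIcc.mpr (Or.inl ⟨hTm_pos.le, htTm⟩)) Set.right_mem_uIcc
    have hi1 := hrrd_int.mono_set hsub1
    have hi2 := hrrd_int.mono_set hsub2
    have hsplit := intervalIntegral.integral_add_adjacent_intervals hi1 hi2
    have hp1 := hprd_int.mono_set hsub1
    have hp2 := hprd_int.mono_set hsub2
    have hpsplit := intervalIntegral.integral_add_adjacent_intervals hp1 hp2
    have h0Tm_nonneg : 0 ≤ ∫ s in (0:ℝ)..Tm, prd s :=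
      intervalIntegral.integral_nonneg hTm_pos.le
        (fun u hu => (hnn u ⟨hu.1, hu.2.trans htTm⟩).2)
    have h0t_le : (∫ s in (0:ℝ)..t, prd s) ≤ Er t := hEr_le t ⟨htpos.le, le_refl t⟩
    have htle1 : t ≤ Tm + 1 := by
      have : η ≤ 1 := min_le_right _ _
      linarith
    have hErt : Er t ≤ M' := hM' t ⟨htpos.le, htle1⟩
    have hprd_Tmt : (∫ s in Tm..t, prd s) ≤ M' := by linarith
    have hloss := integral_rate_le hrrd hK htTm hp2 hi2
      (fun s hs => (hnn s ⟨hTm_pos.le.trans hs.1, hs.2⟩).2)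
    have hcoef : 0 ≤ rrd K / K := div_nonneg hrK.le hK.le
    have he2 : rrd K / K * (∫ s in Tm..t, prd s) ≤ rrd K / K * M' :=
      mul_le_mul_of_nonneg_left hprd_Tmt hcoef
    have he1 : (t - Tm) * rrd K ≤ ε := by
      have h7 : t - Tm < η := by linarith
      have h8 : η ≤ ε / rrd K := min_le_left _ _
      have h9 : t - Tm ≤ ε / rrd K := le_of_lt (lt_of_lt_of_le h7 h8)
      calc (t - Tm) * rrd K ≤ (ε / rrd K) * rrd K :=
            mul_le_mul_of_nonneg_right h9 hrK.le
        _ = ε := div_mul_cancel₀ ε hrK.ne'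
    have hmemTm : (∫ s in (0:ℝ)..Tm, rrd (prd s)) ∈ S Tm := ⟨psr, prd, hfeas', rfl⟩
    have hle := le_csSup (hbdd Tm hTm_pos.le) hmemTm
    rw [← hDS Tm] at hle
    -- x = ∫₀^Tm + ∫_Tm^t; ∫_Tm^t ≤ 2ε; x > B₀ - ε; D Tm = B₀ - 3ε
    have hDTmval : D Tm = B₀ - 3 * ε := by rw [hε]; ring
    linarith
  have hDTm : D Tm = B₀ := le_antisymm hDTm_le hDTm_ge
  -- lower bound property of Tm over the superlevel set
  have hlbA : ∀ T : ℝ, 0 < T → B₀ ≤ D T → Tm ≤ T := by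
    intro T hTpos hTB
    by_contra hTlt
    push_neg at hTlt
    have h1 : D T ≤ B₀ := (hmono T Tm hTpos.le hTlt.le).trans_eq hDTm
    have h2 : T ∈ C := by rw [hC_def]; exact ⟨hTpos, le_antisymm h1 hTB⟩
    exact absurd (hTm_le T h2) (not_le.mpr hTlt)
  refine ⟨hDTm, ?_, ?_⟩
  · apply le_antisymm
    · exact le_csInf ⟨Tm, hTm_pos, hDTm.ge⟩ (fun T hT => hlbA T hT.1 hT.2)
    · exact csInf_le ⟨0, fun T hT => hT.1.le⟩ ⟨hTm_pos, hDTm.ge⟩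
  · intro T hTpos psr prd hfeas hB
    have hx : (∫ t in (0:ℝ)..T, rrd (prd t)) ∈ S T := ⟨psr, prd, hfeas, rfl⟩
    have : B₀ ≤ D T := by
      rw [hDS]
      exact hB.trans (le_csSup (hbdd T hTpos.le) hx)
    exact hlbA T hTpos this
end
end
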